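/- arXiv:2305.00730 — 9 statements merged into one kernel-verified Lean document; each statement's English description precedes it below -/
import Mathlib

section
/- Let G = (V,E) be a finite simple graph and let f be a triple Roman dominating function of G of minimum weight (i.e., weight equal to the triple Roman domination number γ_3R(G)). Then there do not exist adjacent vertices v and u of G with f(v) = 1 and f(u) = 4. -/
open Finset

/-- A triple Roman dominating function on a finite simple graph `G`:
`f : V → {0,1,2,3,4}` such that
* if `f v = 0` then `v` has a neighbor with value `4`, or two distinct neighbors `u, w`
  with `f u ≥ 2` and `f w = 3`, or at least three neighbors assigned value `2`;
* if `f v = 1` then `v` has a neighbor with value `≥ 3` or at least two neighbors with value `2`;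
* if `f v = 2` then `v` has a neighbor with value `≥ 2`. -/
def Is3RDF {V : Type*} [Fintype V] (G : SimpleGraph V) [DecidableRel G.Adj]
    (f : V → ℕ) : Prop :=
  (∀ v, f v ≤ 4) ∧
  ∀ v : V,
    (f v = 0 →
      (∃ z, G.Adj v z ∧ f z = 4) ∨
      (∃ u w, u ≠ w ∧ G.Adj v u ∧ G.Adj v w ∧ 2 ≤ f u ∧ f w = 3) ∨
      3 ≤ ((G.neighborFinset v).filter (fun u => f u = 2)).card) ∧
    (f v = 1 →
      (∃ w, G.Adj v w ∧ 3 ≤ f w) ∨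
      2 ≤ ((G.neighborFinset v).filter (fun u => f u = 2)).card) ∧
    (f v = 2 → ∃ w, G.Adj v w ∧ 2 ≤ f w)

/-- The triple Roman domination number: the minimum weight `∑ v, f v` over all
triple Roman dominating functions of `G`. -/
noncomputable def gamma3R {V : Type*} [Fintype V] (G : SimpleGraph V)
    [DecidableRel G.Adj] : ℕ :=
  sInf {n | ∃ f : V → ℕ, Is3RDF G f ∧ ∑ v, f v = n}

/-- If `f` is a triple Roman dominating function of minimum weight
`γ_3R(G)`, then no two adjacent vertices `v, u` satisfy `f v = 1` and `f u = 4`. -/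
theorem no_adjacent_one_four_in_min_3RDF {V : Type*} [Fintype V]
    (G : SimpleGraph V) [DecidableRel G.Adj] (f : V → ℕ)
    (hf : Is3RDF G f) (hmin : ∑ v, f v = gamma3R G) :
    ¬ ∃ v u : V, G.Adj v u ∧ f v = 1 ∧ f u = 4 := by

  rintro ⟨v, u, hadj, hv1, hu4⟩
  classical
  have hvu : v ≠ u := G.ne_of_adj hadj
  set g : V → ℕ := Function.update f v 0 with hg
  have hgv : g v = 0 := Function.update_self v 0 f
  have hgne : ∀ z, z ≠ v → g z = f z := fun z hz => Function.update_of_ne hz 0 f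
  -- filters agree
  have hfilter : ∀ w : V, ((G.neighborFinset w).filter (fun u => g u = 2)) =
      ((G.neighborFinset w).filter (fun u => f u = 2)) := by
    intro w
    apply Finset.filter_congr
    intro x _
    by_cases hx : x = v
    · subst hx; simp [hgv, hv1]
    · simp [hgne x hx]
  have hg3 : Is3RDF G g := by
    obtain ⟨hb, hc⟩ := hf
    constructor
    · intro z
      by_cases hz : z = v
      · subst hz; simp [hgv]
      · rw [hgne z hz]; exact hb z
    · intro w
      by_cases hw : w = v
      · subst hw
        refine ⟨fun _ => ?_, fun h1 => ?_, fun h2 => ?_⟩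
        · left
          exact ⟨u, hadj, by rw [hgne u (Ne.symm hvu)]; exact hu4⟩
        · rw [hgv] at h1; omega
        · rw [hgv] at h2; omega
      · obtain ⟨h0, h1, h2⟩ := hc w
        rw [hgne w hw]
        refine ⟨fun hw0 => ?_, fun hw1 => ?_, fun hw2 => ?_⟩
        · rcases h0 hw0 with ⟨z, hz, hz4⟩ | ⟨a, b, hab, ha, hb', ha2, hb3⟩ | hcard
          · left
            have hzv : z ≠ v := by rintro rfl; rw [hv1] at hz4; omega
            exact ⟨z, hz, by rw [hgne z hzv]; exact hz4⟩
          · right; left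
            have hav : a ≠ v := by rintro rfl; rw [hv1] at ha2; omega
            have hbv : b ≠ v := by rintro rfl; rw [hv1] at hb3; omega
            exact ⟨a, b, hab, ha, hb', by rw [hgne a hav]; exact ha2,
              by rw [hgne b hbv]; exact hb3⟩
          · right; right; rw [hfilter w]; exact hcard
        · rcases h1 hw1 with ⟨z, hz, hz3⟩ | hcard
          · left
            have hzv : z ≠ v := by rintro rfl; rw [hv1] at hz3; omega
            exact ⟨z, hz, by rw [hgne z hzv]; exact hz3⟩
          · right; rw [hfilter w]; exact hcard
        · obtain ⟨z, hz, hz2⟩ := h2 hw2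
          have hzv : z ≠ v := by rintro rfl; rw [hv1] at hz2; omega
          exact ⟨z, hz, by rw [hgne z hzv]; exact hz2⟩
  have hsum : ∑ z, g z + 1 = ∑ z, f z := by
    rw [hg, Finset.sum_update_of_mem (Finset.mem_univ v)]
    rw [← Finset.add_sum_erase _ f (Finset.mem_univ v), hv1]
    simp [Finset.sdiff_singleton_eq_erase, Nat.add_comm]
  have hle : gamma3R G ≤ ∑ z, g z := Nat.sInf_le ⟨g, hg3, rfl⟩
  omega
end

section
/- Let G = (V,E) be a finite simple graph admitting a triple Roman dominating function. Then there exists a triple Roman dominating function f of G of minimum weight γ_3R(G) such that f(v) ≠ 1 for every vertex v; equivalently, the minimum weight over all triple Roman dominating functions taking values in {0,2,3,4} equals γ_3R(G). -/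
open Finset

section Aux
variable {V : Type*} [Fintype V] [DecidableEq V] (G : SimpleGraph V) [DecidableRel G.Adj]

lemma sum_eq_of_eq_off (f g : V → ℕ) (v w : V) (hvw : v ≠ w)
    (h : ∀ x, x ≠ v → x ≠ w → f x = g x) (hval : f v + f w = g v + g w) :
    ∑ x, f x = ∑ x, g x := by
  have key : ∀ F : V → ℕ, ∑ x, F x = F v + F w + ∑ x ∈ (univ.erase v).erase w, F x := by
    intro F
    rw [← Finset.add_sum_erase _ F (mem_univ v),
      ← Finset.add_sum_erase _ F (Finset.mem_erase.mpr ⟨hvw.symm, mem_univ w⟩)]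
    ring
  rw [key f, key g, hval]
  congr 1
  apply Finset.sum_congr rfl
  intro x hx
  simp only [Finset.mem_erase] at hx
  exact h x hx.2.1 hx.1

lemma is3RDF_of (f g : V → ℕ) (hf : Is3RDF G f)
    (H1 : ∀ x, g x ≤ 4)
    (H2 : ∀ x, f x = 4 → g x = 4)
    (H3 : ∀ x, f x = 3 → 3 ≤ g x)
    (H4 : ∀ x, f x = 2 → g x = 2 ∨ g x = 3)
    (H5 : ∀ x, g x = 0 → f x = 0 ∨
      ((∃ z, G.Adj x z ∧ g z = 4) ∨
       (∃ u w, u ≠ w ∧ G.Adj x u ∧ G.Adj x w ∧ 2 ≤ g u ∧ g w = 3) ∨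
       3 ≤ ((G.neighborFinset x).filter (fun u => g u = 2)).card))
    (H6 : ∀ x, g x = 1 → f x = 1)
    (H7 : ∀ x, g x = 2 → f x = 2) :
    Is3RDF G g := by
  obtain ⟨hle, hcond⟩ := hf
  have H24 : ∀ x, 2 ≤ f x → 2 ≤ g x := by
    intro x hx
    have := hle x
    interval_cases h : f x
    · rcases H4 x h with h' | h' <;> omega
    · have := H3 x h; omega
    · have := H2 x h; omega
  have H34 : ∀ x, 3 ≤ f x → 3 ≤ g x := by
    intro x hx
    have := hle x
    interval_cases h : f x
    · exact H3 x h
    · have := H2 x h; omega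
  refine ⟨H1, fun x => ⟨?_, ?_, ?_⟩⟩
  · -- g x = 0
    intro hx0
    rcases H5 x hx0 with hfx | hc
    swap
    · exact hc
    · -- f x = 0, transfer f's clause
      rcases (hcond x).1 hfx with ⟨z, hz, hz4⟩ | ⟨u, w, huw, hu, hw, hu2, hw3⟩ | hcard
      · exact Or.inl ⟨z, hz, H2 z hz4⟩
      · have hgw := H3 w hw3
        have hgw' := H1 w
        rcases (by omega : g w = 3 ∨ g w = 4) with h3 | h4
        · exact Or.inr (Or.inl ⟨u, w, huw, hu, hw, H24 u hu2, h3⟩)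
        · exact Or.inl ⟨w, hw, h4⟩
      · set s := (G.neighborFinset x).filter (fun u => f u = 2) with hs
        by_cases hb : ∃ b ∈ s, g b = 3
        · obtain ⟨b, hbs, hb3⟩ := hb
          have hbadj : G.Adj x b := by
            have := Finset.mem_filter.mp hbs
            exact (SimpleGraph.mem_neighborFinset _ _ _).mp this.1
          have : 0 < (s.erase b).card := by
            have := Finset.card_erase_of_mem hbs
            omega
          obtain ⟨a, ha⟩ := Finset.card_pos.mp this
          have haeb := Finset.mem_erase.mp ha
          have has := haeb.2
          have hasf := Finset.mem_filter.mp has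
          have haadj : G.Adj x a := (SimpleGraph.mem_neighborFinset _ _ _).mp hasf.1
          have ha2 : 2 ≤ g a := H24 a (by omega)
          exact Or.inr (Or.inl ⟨a, b, haeb.1, haadj, hbadj, ha2, hb3⟩)
        · push_neg at hb
          refine Or.inr (Or.inr ?_)
          have hsub : s ⊆ (G.neighborFinset x).filter (fun u => g u = 2) := by
            intro a ha
            have haf := Finset.mem_filter.mp ha
            refine Finset.mem_filter.mpr ⟨haf.1, ?_⟩
            rcases H4 a haf.2 with h' | h'
            · exact h'
            · exact absurd h' (hb a ha)
          calc 3 ≤ s.card := hcard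
            _ ≤ _ := Finset.card_le_card hsub
  · -- g x = 1
    intro hx1
    have hfx := H6 x hx1
    rcases (hcond x).2.1 hfx with ⟨w, hw, hw3⟩ | hcard
    · exact Or.inl ⟨w, hw, H34 w hw3⟩
    · set s := (G.neighborFinset x).filter (fun u => f u = 2) with hs
      by_cases hb : ∃ b ∈ s, g b = 3
      · obtain ⟨b, hbs, hb3⟩ := hb
        have hbadj : G.Adj x b := by
          have := Finset.mem_filter.mp hbs
          exact (SimpleGraph.mem_neighborFinset _ _ _).mp this.1
        exact Or.inl ⟨b, hbadj, by omega⟩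
      · push_neg at hb
        refine Or.inr ?_
        have hsub : s ⊆ (G.neighborFinset x).filter (fun u => g u = 2) := by
          intro a ha
          have haf := Finset.mem_filter.mp ha
          refine Finset.mem_filter.mpr ⟨haf.1, ?_⟩
          rcases H4 a haf.2 with h' | h'
          · exact h'
          · exact absurd h' (hb a ha)
        calc 2 ≤ s.card := hcard
          _ ≤ _ := Finset.card_le_card hsub
  · -- g x = 2
    intro hx2
    have hfx := H7 x hx2
    obtain ⟨w, hw, hw2⟩ := (hcond x).2.2 hfx
    exact ⟨w, hw, H24 w hw2⟩

lemma step (f : V → ℕ) (hf : Is3RDF G f) (hsum : ∑ x, f x = gamma3R G)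
    (v : V) (hv : f v = 1) :
    ∃ g : V → ℕ, Is3RDF G g ∧ ∑ x, g x = gamma3R G ∧
      (univ.filter (fun x => g x = 1)) = (univ.filter (fun x => f x = 1)).erase v := by
  obtain ⟨hle, hcond⟩ := hf
  have hfI : Is3RDF G f := ⟨hle, hcond⟩
  rcases (hcond v).2.1 hv with ⟨w, hadj, hw3⟩ | hcard
  · have hvw : v ≠ w := G.ne_of_adj hadj
    have hwle := hle w
    rcases (by omega : f w = 3 ∨ f w = 4) with hw3' | hw4'
    · -- raise w from 3 to 4, drop v to 0
      set g : V → ℕ := fun x => if x = v then 0 else if x = w then 4 else f x with hg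
      have hgv : g v = 0 := by simp [hg]
      have hgw : g w = 4 := by simp [hg, hvw.symm]
      have hgo : ∀ x, x ≠ v → x ≠ w → g x = f x := by
        intro x h1 h2; simp [hg, h1, h2]
      have hgI : Is3RDF G g := by
        apply is3RDF_of G f g hfI
        · intro x
          by_cases h1 : x = v
          · simp [h1, hgv]
          · by_cases h2 : x = w
            · simp [h2, hgw]
            · rw [hgo x h1 h2]; exact hle x
        · intro x hx4
          have h1 : x ≠ v := by intro h; rw [h] at hx4; omega
          have h2 : x ≠ w := by intro h; rw [h] at hx4; omega
          rw [hgo x h1 h2]; exact hx4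
        · intro x hx3
          have h1 : x ≠ v := by intro h; rw [h] at hx3; omega
          by_cases h2 : x = w
          · rw [h2, hgw]; omega
          · rw [hgo x h1 h2]; omega
        · intro x hx2
          have h1 : x ≠ v := by intro h; rw [h] at hx2; omega
          have h2 : x ≠ w := by intro h; rw [h] at hx2; omega
          rw [hgo x h1 h2, hx2]; left; rfl
        · intro x hx0
          by_cases h1 : x = v
          · rw [h1]
            exact Or.inr (Or.inl ⟨w, hadj, hgw⟩)
          · by_cases h2 : x = w
            · rw [h2, hgw] at hx0; omega
            · rw [hgo x h1 h2] at hx0; exact Or.inl hx0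
        · intro x hx1
          have h1 : x ≠ v := by intro h; rw [h, hgv] at hx1; omega
          have h2 : x ≠ w := by intro h; rw [h, hgw] at hx1; omega
          rw [← hgo x h1 h2]; exact hx1
        · intro x hx2
          have h1 : x ≠ v := by intro h; rw [h, hgv] at hx2; omega
          have h2 : x ≠ w := by intro h; rw [h, hgw] at hx2; omega
          rw [← hgo x h1 h2]; exact hx2
      refine ⟨g, hgI, ?_, ?_⟩
      · rw [← hsum]
        apply (sum_eq_of_eq_off g f v w hvw _ _).symm.symm
        · intro x h1 h2; exact hgo x h1 h2
        · rw [hgv, hgw, hv, hw3']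
      · ext x
        simp only [Finset.mem_filter, Finset.mem_erase, Finset.mem_univ, true_and]
        constructor
        · intro hx1
          have h1 : x ≠ v := by intro h; rw [h, hgv] at hx1; omega
          have h2 : x ≠ w := by intro h; rw [h, hgw] at hx1; omega
          exact ⟨h1, by rw [← hgo x h1 h2]; exact hx1⟩
        · rintro ⟨h1, hx1⟩
          have h2 : x ≠ w := by intro h; rw [h] at hx1; omega
          rw [hgo x h1 h2]; exact hx1
    · -- f w = 4 : contradiction with minimality
      exfalso
      set g : V → ℕ := fun x => if x = v then 0 else f x with hg
      have hgv : g v = 0 := by simp [hg]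
      have hgo : ∀ x, x ≠ v → g x = f x := by
        intro x h1; simp [hg, h1]
      have hgI : Is3RDF G g := by
        apply is3RDF_of G f g hfI
        · intro x
          by_cases h1 : x = v
          · simp [h1, hgv]
          · rw [hgo x h1]; exact hle x
        · intro x hx4
          have h1 : x ≠ v := by intro h; rw [h] at hx4; omega
          rw [hgo x h1]; exact hx4
        · intro x hx3
          have h1 : x ≠ v := by intro h; rw [h] at hx3; omega
          rw [hgo x h1]; omega
        · intro x hx2
          have h1 : x ≠ v := by intro h; rw [h] at hx2; omega
          rw [hgo x h1, hx2]; left; rfl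
        · intro x hx0
          by_cases h1 : x = v
          · rw [h1]
            have h2 : w ≠ v := hvw.symm
            exact Or.inr (Or.inl ⟨w, hadj, by rw [hgo w h2]; exact hw4'⟩)
          · rw [hgo x h1] at hx0; exact Or.inl hx0
        · intro x hx1
          have h1 : x ≠ v := by intro h; rw [h, hgv] at hx1; omega
          rw [← hgo x h1]; exact hx1
        · intro x hx2
          have h1 : x ≠ v := by intro h; rw [h, hgv] at hx2; omega
          rw [← hgo x h1]; exact hx2
      have hmem : gamma3R G ≤ ∑ x, g x := by
        apply Nat.sInf_le
        exact ⟨g, hgI, rfl⟩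
      have hsplit : ∀ F : V → ℕ, ∑ x, F x = F v + ∑ x ∈ univ.erase v, F x := by
        intro F
        rw [← Finset.add_sum_erase _ F (mem_univ v)]
      have : ∑ x ∈ univ.erase v, g x = ∑ x ∈ univ.erase v, f x := by
        apply Finset.sum_congr rfl
        intro x hx
        exact hgo x (Finset.mem_erase.mp hx).1
      have h1 := hsplit f
      have h2 := hsplit g
      omega
  · -- two neighbors with value 2
    set s := (G.neighborFinset v).filter (fun u => f u = 2) with hs
    obtain ⟨u, hus, w, hws, huw⟩ := Finset.one_lt_card.mp (by omega : 1 < s.card)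
    have huf := Finset.mem_filter.mp hus
    have hwf := Finset.mem_filter.mp hws
    have huadj : G.Adj v u := (SimpleGraph.mem_neighborFinset _ _ _).mp huf.1
    have hwadj : G.Adj v w := (SimpleGraph.mem_neighborFinset _ _ _).mp hwf.1
    have hu2 : f u = 2 := huf.2
    have hw2 : f w = 2 := hwf.2
    have hvu : v ≠ u := G.ne_of_adj huadj
    have hvw : v ≠ w := G.ne_of_adj hwadj
    set g : V → ℕ := fun x => if x = v then 0 else if x = u then 3 else f x with hg
    have hgv : g v = 0 := by simp [hg]
    have hgu : g u = 3 := by simp [hg, hvu.symm]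
    have hgw : g w = 2 := by simp [hg, hvw.symm, huw.symm, hw2]
    have hgo : ∀ x, x ≠ v → x ≠ u → g x = f x := by
      intro x h1 h2; simp [hg, h1, h2]
    have hgI : Is3RDF G g := by
      apply is3RDF_of G f g ⟨hle, hcond⟩
      · intro x
        by_cases h1 : x = v
        · simp [h1, hgv]
        · by_cases h2 : x = u
          · simp [h2, hgu]
          · rw [hgo x h1 h2]; exact hle x
      · intro x hx4
        have h1 : x ≠ v := by intro h; rw [h] at hx4; omega
        have h2 : x ≠ u := by intro h; rw [h] at hx4; omega
        rw [hgo x h1 h2]; exact hx4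
      · intro x hx3
        have h1 : x ≠ v := by intro h; rw [h] at hx3; omega
        have h2 : x ≠ u := by intro h; rw [h] at hx3; omega
        rw [hgo x h1 h2]; omega
      · intro x hx2
        have h1 : x ≠ v := by intro h; rw [h] at hx2; omega
        by_cases h2 : x = u
        · rw [h2, hgu]; right; rfl
        · rw [hgo x h1 h2, hx2]; left; rfl
      · intro x hx0
        by_cases h1 : x = v
        · rw [h1]
          refine Or.inr (Or.inr (Or.inl ⟨w, u, huw.symm, hwadj, huadj, ?_, hgu⟩))
          omega
        · by_cases h2 : x = u
          · rw [h2, hgu] at hx0; omega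
          · rw [hgo x h1 h2] at hx0; exact Or.inl hx0
      · intro x hx1
        have h1 : x ≠ v := by intro h; rw [h, hgv] at hx1; omega
        have h2 : x ≠ u := by intro h; rw [h, hgu] at hx1; omega
        rw [← hgo x h1 h2]; exact hx1
      · intro x hx2
        have h1 : x ≠ v := by intro h; rw [h, hgv] at hx2; omega
        have h2 : x ≠ u := by intro h; rw [h, hgu] at hx2; omega
        rw [← hgo x h1 h2]; exact hx2
    refine ⟨g, hgI, ?_, ?_⟩
    · rw [← hsum]
      apply (sum_eq_of_eq_off g f v u hvu _ _).symm.symm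
      · intro x h1 h2; exact hgo x h1 h2
      · rw [hgv, hgu, hv, hu2]
    · ext x
      simp only [Finset.mem_filter, Finset.mem_erase, Finset.mem_univ, true_and]
      constructor
      · intro hx1
        have h1 : x ≠ v := by intro h; rw [h, hgv] at hx1; omega
        have h2 : x ≠ u := by intro h; rw [h, hgu] at hx1; omega
        exact ⟨h1, by rw [← hgo x h1 h2]; exact hx1⟩
      · rintro ⟨h1, hx1⟩
        have h2 : x ≠ u := by intro h; rw [h] at hx1; omega
        rw [hgo x h1 h2]; exact hx1

end Aux

/-- If `G` admits a 3RDF, then there is a 3RDF of minimum weight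
`γ_3R(G)` never taking the value `1`. -/
theorem exists_min_3RDF_avoiding_one {V : Type*} [Fintype V]
    (G : SimpleGraph V) [DecidableRel G.Adj]
    (h : ∃ g : V → ℕ, Is3RDF G g) :
    ∃ f : V → ℕ, Is3RDF G f ∧ (∀ v, f v ≠ 1) ∧ ∑ v, f v = gamma3R G := by
  classical
  have hne : {n | ∃ f : V → ℕ, Is3RDF G f ∧ ∑ v, f v = n}.Nonempty := by
    obtain ⟨g, hg⟩ := h
    exact ⟨∑ v, g v, g, hg, rfl⟩
  have h0 : ∃ f : V → ℕ, Is3RDF G f ∧ ∑ v, f v = gamma3R G := Nat.sInf_mem hne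
  obtain ⟨f0, hf0, hsum0⟩ := h0
  suffices H : ∀ k (f : V → ℕ), Is3RDF G f → ∑ x, f x = gamma3R G →
      (univ.filter (fun x => f x = 1)).card ≤ k →
      ∃ f', Is3RDF G f' ∧ (∀ v, f' v ≠ 1) ∧ ∑ v, f' v = gamma3R G by
    exact H _ f0 hf0 hsum0 le_rfl
  intro k
  induction k with
  | zero =>
    intro f hf hs hc
    refine ⟨f, hf, ?_, hs⟩
    intro v hv1
    have : v ∈ univ.filter (fun x => f x = 1) := by simp [hv1]
    have := Finset.card_pos.mpr ⟨v, this⟩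
    omega
  | succ k ih =>
    intro f hf hs hc
    by_cases h1 : ∀ v, f v ≠ 1
    · exact ⟨f, hf, h1, hs⟩
    · push_neg at h1
      obtain ⟨v, hv⟩ := h1
      obtain ⟨g, hg, hgs, hfil⟩ := step G f hf hs v hv
      apply ih g hg hgs
      rw [hfil]
      have hvmem : v ∈ univ.filter (fun x => f x = 1) := by simp [hv]
      have := Finset.card_erase_of_mem hvmem
      omega
end

section
/- Let G = (V,E) be a finite simple graph, let f be a triple Roman dominating function of G, and let v be a vertex with f(v) = 1 having two distinct neighbors u and w with f(u) = 2 and f(w) = 2. Define g by g(v) = 0, g(u) = 3, and g(x) = f(x) for all other vertices x. Then g is a triple Roman dominating function of G with the same weight as f. -/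
open Finset

/-- If `f` is a 3RDF, `f v = 1`, and `v` has distinct neighbors `u, w`
with `f u = f w = 2`, then `g` with `g v = 0`, `g u = 3`, and `g = f` elsewhere is a
3RDF of the same weight. -/
theorem swap_one_two_to_zero_three_is_3RDF {V : Type*} [Fintype V] [DecidableEq V]
    (G : SimpleGraph V) [DecidableRel G.Adj] (f : V → ℕ) (hf : Is3RDF G f)
    (v u w : V) (huw : u ≠ w) (hvu : G.Adj v u) (hvw : G.Adj v w)
    (hv : f v = 1) (hu : f u = 2) (hw : f w = 2) :
    Is3RDF G (Function.update (Function.update f v 0) u 3) ∧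
      ∑ x, Function.update (Function.update f v 0) u 3 x = ∑ x, f x := by
  obtain ⟨hb, hc⟩ := hf
  set g := Function.update (Function.update f v 0) u 3 with hgdef
  have huv : u ≠ v := by intro h; rw [h, hv] at hu; omega
  have hwv : w ≠ v := by intro h; rw [h, hv] at hw; omega
  have hgu : g u = 3 := by simp [hgdef]
  have hgv : g v = 0 := by simp [hgdef, Function.update_of_ne (Ne.symm huv)]
  have hgo : ∀ x, x ≠ u → x ≠ v → g x = f x := by
    intro x hxu hxv
    simp [hgdef, Function.update_of_ne hxu, Function.update_of_ne hxv]
  have hgw : g w = 2 := by rw [hgo w (Ne.symm huw) hwv, hw]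
  constructor
  · constructor
    · intro x
      by_cases hx1 : x = u
      · rw [hx1, hgu]; omega
      · by_cases hx2 : x = v
        · rw [hx2, hgv]; omega
        · rw [hgo x hx1 hx2]; exact hb x
    · intro x
      by_cases hx1 : x = u
      · subst hx1
        refine ⟨?_, ?_, ?_⟩ <;> intro h <;> rw [hgu] at h <;> omega
      · by_cases hx2 : x = v
        · subst hx2
          refine ⟨?_, ?_, ?_⟩
          · intro _
            right; left
            exact ⟨w, u, Ne.symm huw, hvw, hvu, by rw [hgw], hgu⟩
          · intro h; rw [hgv] at h; omega
          · intro h; rw [hgv] at h; omega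
        · -- x ≠ u, x ≠ v
          have hgx : g x = f x := hgo x hx1 hx2
          obtain ⟨c0, c1, c2⟩ := hc x
          refine ⟨?_, ?_, ?_⟩
          · intro h
            rw [hgx] at h
            rcases c0 h with ⟨z, hz, hz4⟩ | ⟨a, b, hab, ha, hb', ha2, hb3⟩ | hcard
            · left
              have hzu : z ≠ u := by intro e; rw [e, hu] at hz4; omega
              have hzv : z ≠ v := by intro e; rw [e, hv] at hz4; omega
              exact ⟨z, hz, by rw [hgo z hzu hzv, hz4]⟩
            · right; left
              have hbu : b ≠ u := by intro e; rw [e, hu] at hb3; omega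
              have hbv : b ≠ v := by intro e; rw [e, hv] at hb3; omega
              by_cases hau : a = u
              · subst hau
                exact ⟨b, a, Ne.symm hab, hb', ha, by rw [hgo b hbu hbv]; omega,
                  by rw [hgu]⟩
              · have hav : a ≠ v := by intro e; rw [e, hv] at ha2; omega
                exact ⟨a, b, hab, ha, hb', by rw [hgo a hau hav]; omega,
                  by rw [hgo b hbu hbv, hb3]⟩
            · by_cases huS : u ∈ (G.neighborFinset x).filter (fun z => f z = 2)
              · right; left
                have h2 : 2 ≤ ((G.neighborFinset x).filter (fun z => f z = 2)).card - 1 := by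
                  omega
                have hcard' : (((G.neighborFinset x).filter (fun z => f z = 2)).erase u).card
                    = ((G.neighborFinset x).filter (fun z => f z = 2)).card - 1 :=
                  Finset.card_erase_of_mem huS
                have hne : (((G.neighborFinset x).filter (fun z => f z = 2)).erase u).Nonempty := by
                  rw [← Finset.card_pos, hcard']; omega
                obtain ⟨a, haS⟩ := hne
                obtain ⟨hau, haS'⟩ := Finset.mem_erase.mp haS
                obtain ⟨hanb, ha2⟩ := Finset.mem_filter.mp haS'
                have hav : a ≠ v := by intro e; rw [e, hv] at ha2; omega
                obtain ⟨hunb, _⟩ := Finset.mem_filter.mp huS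
                exact ⟨a, u, hau, (G.mem_neighborFinset x a).mp hanb,
                  (G.mem_neighborFinset x u).mp hunb,
                  by rw [hgo a hau hav, ha2], hgu⟩
              · right; right
                refine le_trans hcard (Finset.card_le_card ?_)
                intro z hz
                obtain ⟨hznb, hz2⟩ := Finset.mem_filter.mp hz
                have hzu : z ≠ u := by intro e; subst e; exact huS hz
                have hzv : z ≠ v := by intro e; rw [e, hv] at hz2; omega
                exact Finset.mem_filter.mpr ⟨hznb, by rw [hgo z hzu hzv, hz2]⟩
          · intro h
            rw [hgx] at h
            rcases c1 h with ⟨z, hz, hz3⟩ | hcard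
            · left
              have hzu : z ≠ u := by intro e; rw [e, hu] at hz3; omega
              have hzv : z ≠ v := by intro e; rw [e, hv] at hz3; omega
              exact ⟨z, hz, by rw [hgo z hzu hzv]; omega⟩
            · by_cases huS : u ∈ (G.neighborFinset x).filter (fun z => f z = 2)
              · left
                obtain ⟨hunb, _⟩ := Finset.mem_filter.mp huS
                exact ⟨u, (G.mem_neighborFinset x u).mp hunb, by rw [hgu]⟩
              · right
                refine le_trans hcard (Finset.card_le_card ?_)
                intro z hz
                obtain ⟨hznb, hz2⟩ := Finset.mem_filter.mp hz
                have hzu : z ≠ u := by intro e; subst e; exact huS hz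
                have hzv : z ≠ v := by intro e; rw [e, hv] at hz2; omega
                exact Finset.mem_filter.mpr ⟨hznb, by rw [hgo z hzu hzv, hz2]⟩
          · intro h
            rw [hgx] at h
            obtain ⟨z, hz, hz2⟩ := c2 h
            have hzv : z ≠ v := by intro e; rw [e, hv] at hz2; omega
            by_cases hzu : z = u
            · exact ⟨z, hz, by rw [hzu, hgu]; omega⟩
            · exact ⟨z, hz, by rw [hgo z hzu hzv]; omega⟩
  · have key : ∀ (h : V → ℕ), ∑ x, h x =
        h u + (h v + ∑ x ∈ (Finset.univ.erase u).erase v, h x) := by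
      intro h
      rw [← Finset.add_sum_erase _ h (Finset.mem_univ u),
        ← Finset.add_sum_erase _ h (Finset.mem_erase.mpr ⟨Ne.symm huv, Finset.mem_univ v⟩)]
    rw [key g, key f, hgu, hgv, hu, hv]
    have : ∑ x ∈ (Finset.univ.erase u).erase v, g x
        = ∑ x ∈ (Finset.univ.erase u).erase v, f x := by
      apply Finset.sum_congr rfl
      intro x hx
      obtain ⟨hxv, hx'⟩ := Finset.mem_erase.mp hx
      obtain ⟨hxu, -⟩ := Finset.mem_erase.mp hx'
      exact hgo x hxu hxv
    omega
end

section
/- Let G = (V,E) be a finite simple graph, let f be a triple Roman dominating function of G, and let v be a vertex with f(v) = 1 having a neighbor u with f(u) = 3. Define g by g(v) = 0, g(u) = 4, and g(x) = f(x) for all other vertices x. Then g is a triple Roman dominating function of G with the same weight as f. -/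
open Finset

/-- If `f` is a 3RDF, `f v = 1`, and `v` has a neighbor `u` with
`f u = 3`, then `g` with `g v = 0`, `g u = 4`, and `g = f` elsewhere is a 3RDF of the
same weight. -/
theorem swap_one_three_to_zero_four_is_3RDF {V : Type*} [Fintype V] [DecidableEq V]
    (G : SimpleGraph V) [DecidableRel G.Adj] (f : V → ℕ) (hf : Is3RDF G f)
    (v u : V) (hvu : G.Adj v u) (hv : f v = 1) (hu : f u = 3) :
    Is3RDF G (Function.update (Function.update f v 0) u 4) ∧
      ∑ x, Function.update (Function.update f v 0) u 4 x = ∑ x, f x := by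

  obtain ⟨hb, hcond⟩ := hf
  have hne : v ≠ u := hvu.ne
  set g := Function.update (Function.update f v 0) u 4 with hg
  have hgv : g v = 0 := by simp [hg, Function.update_apply, hne]
  have hgu : g u = 4 := by simp [hg]
  have hgx : ∀ x, x ≠ v → x ≠ u → g x = f x := by
    intro x hxv hxu; simp [hg, Function.update_apply, hxv, hxu]
  have h2 : ∀ z, g z = 2 ↔ f z = 2 := by
    intro z
    by_cases hz : z = u
    · subst hz; rw [hgu, hu]; omega
    by_cases hz' : z = v
    · subst hz'; rw [hgv, hv]; omega
    · rw [hgx z hz' hz]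
  have hfilt : ∀ x, ((G.neighborFinset x).filter (fun z => g z = 2))
      = ((G.neighborFinset x).filter (fun z => f z = 2)) := by
    intro x
    apply Finset.filter_congr
    intro z _
    simp [h2 z]
  constructor
  · constructor
    · intro x
      by_cases hx : x = u
      · subst hx; rw [hgu]
      by_cases hx' : x = v
      · subst hx'; rw [hgv]; omega
      · rw [hgx x hx' hx]; exact hb x
    · intro x
      obtain ⟨h0, h1, hh2⟩ := hcond x
      by_cases hx : x = u
      · subst hx
        refine ⟨fun h => ?_, fun h => ?_, fun h => ?_⟩ <;> rw [hgu] at h <;> omega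
      by_cases hx' : x = v
      · subst hx'
        refine ⟨fun _ => ?_, fun h => ?_, fun h => ?_⟩
        · exact Or.inl ⟨u, hvu, hgu⟩
        · rw [hgv] at h; omega
        · rw [hgv] at h; omega
      rw [hgx x hx' hx] at *
      refine ⟨fun h => ?_, fun h => ?_, fun h => ?_⟩
      · rcases h0 h with ⟨z, hadj, hz4⟩ | ⟨a, w, haw, ha, hw, ha2, hw3⟩ | hcard
        · have hzv : z ≠ v := by intro e; rw [e, hv] at hz4; omega
          have hzu : z ≠ u := by intro e; rw [e, hu] at hz4; omega
          exact Or.inl ⟨z, hadj, by rw [hgx z hzv hzu]; exact hz4⟩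
        · by_cases hwu : w = u
          · exact Or.inl ⟨w, hw, by rw [hwu, hgu]⟩
          · have hwv : w ≠ v := by intro e; rw [e, hv] at hw3; omega
            have hav : a ≠ v := by intro e; rw [e, hv] at ha2; omega
            refine Or.inr (Or.inl ⟨a, w, haw, ha, hw, ?_, by rw [hgx w hwv hwu]; exact hw3⟩)
            by_cases hau : a = u
            · rw [hau, hgu]; omega
            · rw [hgx a hav hau]; exact ha2
        · exact Or.inr (Or.inr (by rw [hfilt x]; exact hcard))
      · rcases h1 h with ⟨w, hadj, hw3⟩ | hcard
        · have hwv : w ≠ v := by intro e; rw [e, hv] at hw3; omega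
          by_cases hwu : w = u
          · exact Or.inl ⟨w, hadj, by rw [hwu, hgu]; omega⟩
          · exact Or.inl ⟨w, hadj, by rw [hgx w hwv hwu]; exact hw3⟩
        · exact Or.inr (by rw [hfilt x]; exact hcard)
      · rcases hh2 h with ⟨w, hadj, hw2⟩
        have hwv : w ≠ v := by intro e; rw [e, hv] at hw2; omega
        by_cases hwu : w = u
        · exact ⟨w, hadj, by rw [hwu, hgu]; omega⟩
        · exact ⟨w, hadj, by rw [hgx w hwv hwu]; exact hw2⟩
  · have hes : ∀ (a : V) (t : Finset V), t \ {a} = t.erase a := fun a t =>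
      Finset.sdiff_singleton_eq_erase a t
    have e1 : ∑ x, g x = 4 + ∑ x ∈ Finset.univ.erase u, Function.update f v 0 x := by
      rw [hg, Finset.sum_update_of_mem (Finset.mem_univ u), hes]
    have hvmem : v ∈ Finset.univ.erase u := Finset.mem_erase.2 ⟨hne, Finset.mem_univ v⟩
    have e2 : ∑ x ∈ Finset.univ.erase u, Function.update f v 0 x
        = 0 + ∑ x ∈ (Finset.univ.erase u).erase v, f x := by
      rw [Finset.sum_update_of_mem hvmem, hes]
    have e3 : ∑ x, f x = f u + ∑ x ∈ Finset.univ.erase u, f x :=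
      (Finset.add_sum_erase _ f (Finset.mem_univ u)).symm
    have e4 : ∑ x ∈ Finset.univ.erase u, f x
        = f v + ∑ x ∈ (Finset.univ.erase u).erase v, f x :=
      (Finset.add_sum_erase _ f hvmem).symm
    rw [e1, e2, e3, e4, hu, hv]
    omega
end

section
/- Let G = (V,E) be a finite simple graph and let f be a quadruple Roman dominating function of G of minimum weight (i.e., weight equal to the quadruple Roman domination number γ_4R(G)). Then there do not exist adjacent vertices v and u of G with f(v) = 1 and f(u) = 5. -/
open Finset

/-- A quadruple Roman dominating function on a finite simple graph `G`:
`f : V → {0,1,2,3,4,5}` such that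
* if `f v = 0` then `v` has a neighbor with value `5`, or two distinct neighbors `u, w`
  with `f u = 4` and `f w ≥ 2`, or at least two neighbors with value `≥ 3`, or at least
  four neighbors with value `2`, or two neighbors with value `2` and one with value `3`;
* if `f v = 1` then `v` has a neighbor with value `≥ 4`, or two distinct neighbors `u, w`
  with `f u = 3` and `f w ≥ 2`, or at least three neighbors with value `2`;
* if `f v = 2` then `v` has a neighbor with value `≥ 3` or at least two neighbors with
  value `2`;
* if `f v = 3` then `v` has a neighbor with value `≥ 2`. -/
def Is4RDF {V : Type*} [Fintype V] (G : SimpleGraph V) [DecidableRel G.Adj]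
    (f : V → ℕ) : Prop :=
  (∀ v, f v ≤ 5) ∧
  ∀ v : V,
    (f v = 0 →
      (∃ u, G.Adj v u ∧ f u = 5) ∨
      (∃ u w, u ≠ w ∧ G.Adj v u ∧ G.Adj v w ∧ f u = 4 ∧ 2 ≤ f w) ∨
      2 ≤ ((G.neighborFinset v).filter (fun u => 3 ≤ f u)).card ∨
      4 ≤ ((G.neighborFinset v).filter (fun u => f u = 2)).card ∨
      (2 ≤ ((G.neighborFinset v).filter (fun u => f u = 2)).card ∧
        1 ≤ ((G.neighborFinset v).filter (fun u => f u = 3)).card)) ∧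
    (f v = 1 →
      (∃ u, G.Adj v u ∧ 4 ≤ f u) ∨
      (∃ u w, u ≠ w ∧ G.Adj v u ∧ G.Adj v w ∧ f u = 3 ∧ 2 ≤ f w) ∨
      3 ≤ ((G.neighborFinset v).filter (fun u => f u = 2)).card) ∧
    (f v = 2 →
      (∃ u, G.Adj v u ∧ 3 ≤ f u) ∨
      2 ≤ ((G.neighborFinset v).filter (fun u => f u = 2)).card) ∧
    (f v = 3 → ∃ u, G.Adj v u ∧ 2 ≤ f u)

/-- The quadruple Roman domination number: the minimum weight `∑ v, f v` over all
quadruple Roman dominating functions of `G`. -/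
noncomputable def gamma4R {V : Type*} [Fintype V] (G : SimpleGraph V)
    [DecidableRel G.Adj] : ℕ :=
  sInf {n | ∃ f : V → ℕ, Is4RDF G f ∧ ∑ v, f v = n}

/-- If `f` is a quadruple Roman dominating function of minimum weight
`γ_4R(G)`, then no two adjacent vertices `v, u` satisfy `f v = 1` and `f u = 5`. -/
theorem no_adjacent_one_five_in_min_4RDF {V : Type*} [Fintype V]
    (G : SimpleGraph V) [DecidableRel G.Adj] (f : V → ℕ)
    (hf : Is4RDF G f) (hmin : ∑ v, f v = gamma4R G) :
    ¬ ∃ v u : V, G.Adj v u ∧ f v = 1 ∧ f u = 5 := by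
  rintro ⟨v, u, hadj, hv1, hu5⟩
  classical
  set g : V → ℕ := Function.update f v 0 with hg
  have hgv : g v = 0 := Function.update_self _ _ _
  have hgx : ∀ x, x ≠ v → g x = f x := fun x hx => Function.update_of_ne hx _ _
  have key : ∀ (x : V) (c : ℕ), 2 ≤ c → (c ≤ g x ↔ c ≤ f x) := by
    intro x c hc
    rcases eq_or_ne x v with rfl | h
    · rw [hgv, hv1]; omega
    · rw [hgx x h]
  have keyeq : ∀ (x : V) (c : ℕ), 2 ≤ c → (g x = c ↔ f x = c) := by
    intro x c hc
    rcases eq_or_ne x v with rfl | h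
    · rw [hgv, hv1]; omega
    · rw [hgx x h]
  have hfle : ∀ (w : V) (c : ℕ), 2 ≤ c →
      (G.neighborFinset w).filter (fun x => c ≤ g x) =
      (G.neighborFinset w).filter (fun x => c ≤ f x) := by
    intro w c hc
    exact Finset.filter_congr (fun x _ => by rw [key x c hc])
  have hfeq : ∀ (w : V) (c : ℕ), 2 ≤ c →
      (G.neighborFinset w).filter (fun x => g x = c) =
      (G.neighborFinset w).filter (fun x => f x = c) := by
    intro w c hc
    exact Finset.filter_congr (fun x _ => by rw [keyeq x c hc])
  obtain ⟨hb, hc⟩ := hf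
  have hunev : u ≠ v := by intro h; rw [h, hv1] at hu5; omega
  have h4 : Is4RDF G g := by
    refine ⟨fun x => ?_, fun w => ?_⟩
    · rcases eq_or_ne x v with rfl | h
      · rw [hgv]; omega
      · rw [hgx x h]; exact hb x
    · obtain ⟨h0, h1, h2, h3⟩ := hc w
      rcases eq_or_ne w v with rfl | hw
      · refine ⟨fun _ => ?_, fun h => ?_, fun h => ?_, fun h => ?_⟩
        · exact Or.inl ⟨u, hadj, by rw [hgx u hunev]; exact hu5⟩
        · rw [hgv] at h; omega
        · rw [hgv] at h; omega
        · rw [hgv] at h; omega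
      · rw [show g w = f w from hgx w hw]
        refine ⟨fun h => ?_, fun h => ?_, fun h => ?_, fun h => ?_⟩
        · rcases h0 h with ⟨x, hx, hx5⟩ | ⟨x, y, hxy, hax, hay, hx4, hy2⟩ | hcard | hcard | ⟨hc2, hc3⟩
          · exact Or.inl ⟨x, hx, (keyeq x 5 (by norm_num)).2 hx5⟩
          · exact Or.inr (Or.inl ⟨x, y, hxy, hax, hay, (keyeq x 4 (by norm_num)).2 hx4,
              (key y 2 le_rfl).2 hy2⟩)
          · exact Or.inr (Or.inr (Or.inl (by rw [hfle w 3 (by norm_num)]; exact hcard)))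
          · exact Or.inr (Or.inr (Or.inr (Or.inl (by rw [hfeq w 2 le_rfl]; exact hcard))))
          · exact Or.inr (Or.inr (Or.inr (Or.inr
              ⟨by rw [hfeq w 2 le_rfl]; exact hc2, by rw [hfeq w 3 (by norm_num)]; exact hc3⟩)))
        · rcases h1 h with ⟨x, hx, hx4⟩ | ⟨x, y, hxy, hax, hay, hx3, hy2⟩ | hcard
          · exact Or.inl ⟨x, hx, (key x 4 (by norm_num)).2 hx4⟩
          · exact Or.inr (Or.inl ⟨x, y, hxy, hax, hay, (keyeq x 3 (by norm_num)).2 hx3,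
              (key y 2 le_rfl).2 hy2⟩)
          · exact Or.inr (Or.inr (by rw [hfeq w 2 le_rfl]; exact hcard))
        · rcases h2 h with ⟨x, hx, hx3⟩ | hcard
          · exact Or.inl ⟨x, hx, (key x 3 (by norm_num)).2 hx3⟩
          · exact Or.inr (by rw [hfeq w 2 le_rfl]; exact hcard)
        · obtain ⟨x, hx, hx2⟩ := h3 h
          exact ⟨x, hx, (key x 2 le_rfl).2 hx2⟩
  have hsum : ∑ x, g x + 1 = ∑ x, f x := by
    rw [hg]
    rw [Finset.sum_update_of_mem (Finset.mem_univ v)]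
    rw [← Finset.sum_erase_add Finset.univ f (Finset.mem_univ v), Finset.erase_eq]
    omega
  have hle : gamma4R G ≤ ∑ x, g x := Nat.sInf_le ⟨g, h4, rfl⟩
  omega
end

section
/- Let G = (V,E) be a finite simple graph admitting a quadruple Roman dominating function. Then there exists a quadruple Roman dominating function f of G of minimum weight γ_4R(G) such that f(v) ≠ 1 for every vertex v; equivalently, the minimum weight over all quadruple Roman dominating functions taking values in {0,2,3,4,5} equals γ_4R(G). -/
open Finset

section Helpers
variable {α : Type*}

lemma filter_card_mono (s : Finset α) {p q : α → Prop} [DecidablePred p] [DecidablePred q]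
    (h : ∀ y ∈ s, p y → q y) : (s.filter p).card ≤ (s.filter q).card :=
  Finset.card_le_card fun y hy => by
    rw [Finset.mem_filter] at hy ⊢
    exact ⟨hy.1, h y hy.1 hy.2⟩

lemma filter_card_drop [DecidableEq α] (s : Finset α) {p q : α → Prop}
    [DecidablePred p] [DecidablePred q]
    (u : α) (h : ∀ y ∈ s, p y → q y ∨ y = u) :
    (s.filter p).card ≤ (s.filter q).card + 1 := by
  have hsub : s.filter p ⊆ insert u (s.filter q) := by
    intro y hy
    rw [Finset.mem_filter] at hy
    rcases h y hy.1 hy.2 with hq | rfl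
    · exact Finset.mem_insert_of_mem (Finset.mem_filter.mpr ⟨hy.1, hq⟩)
    · exact Finset.mem_insert_self _ _
  exact (Finset.card_le_card hsub).trans (Finset.card_insert_le _ _)

end Helpers

/-- Case where `v` with `f v = 1` has a neighbor of value 5: just set `f v := 0`. -/
lemma reduce5 {V : Type*} [Fintype V] [DecidableEq V] (G : SimpleGraph V) [DecidableRel G.Adj]
    (f : V → ℕ) (hf : Is4RDF G f) (v u : V) (hadj : G.Adj v u) (hv : f v = 1)
    (hu5 : f u = 5) :
    ∃ f' : V → ℕ, Is4RDF G f' ∧ (∑ x, f' x ≤ ∑ x, f x) ∧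
      ∀ x, f' x = 1 → f x = 1 ∧ x ≠ v := by
  classical
  set F : V → ℕ := fun x => if x = v then 0 else f x with hF
  have hFv : F v = 0 := by simp [hF]
  have hFx : ∀ x, x ≠ v → F x = f x := by intro x h1; simp [hF, h1]
  have hmono : ∀ y k, 2 ≤ k → k ≤ f y → k ≤ F y := by
    intro y k hk hky
    by_cases h1 : y = v
    · subst h1; omega
    · rw [hFx y h1]; exact hky
  have hexact : ∀ y c, 2 ≤ c → f y = c → F y = c := by
    intro y c hc hyc
    by_cases h1 : y = v
    · subst h1; omega
    · rw [hFx y h1]; exact hyc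
  refine ⟨F, ⟨?_, fun x => ?_⟩, ?_, ?_⟩
  · intro x
    by_cases h1 : x = v
    · subst h1; omega
    · rw [hFx x h1]; exact hf.1 x
  · by_cases hxv : x = v
    · subst hxv
      refine ⟨fun _ => Or.inl ⟨u, hadj, hexact u 5 (by omega) hu5⟩, ?_, ?_, ?_⟩ <;>
        · intro hcontra; rw [hFv] at hcontra; omega
    · have hX : F x = f x := hFx x hxv
      have heq2 : ∀ y ∈ G.neighborFinset x, f y = 2 → F y = 2 :=
        fun y _ hy => hexact y 2 le_rfl hy
      have heq3 : ∀ y ∈ G.neighborFinset x, f y = 3 → F y = 3 :=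
        fun y _ hy => hexact y 3 (by omega) hy
      refine ⟨?_, ?_, ?_, ?_⟩
      · intro h0; rw [hX] at h0
        rcases (hf.2 x).1 h0 with ⟨y, hy, hy5⟩ | ⟨y, w, hyw, hy, hw, hy4, hw2⟩ | h3 | h4 | ⟨h52, h53⟩
        · exact Or.inl ⟨y, hy, hexact y 5 (by omega) hy5⟩
        · exact Or.inr (Or.inl ⟨y, w, hyw, hy, hw, hexact y 4 (by omega) hy4,
            hmono w 2 le_rfl hw2⟩)
        · exact Or.inr (Or.inr (Or.inl (le_trans h3
            (filter_card_mono _ (fun y _ hy => hmono y 3 (by omega) hy)))))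
        · exact Or.inr (Or.inr (Or.inr (Or.inl (le_trans h4 (filter_card_mono _ heq2)))))
        · exact Or.inr (Or.inr (Or.inr (Or.inr ⟨le_trans h52 (filter_card_mono _ heq2),
            le_trans h53 (filter_card_mono _ heq3)⟩)))
      · intro h1; rw [hX] at h1
        rcases (hf.2 x).2.1 h1 with ⟨y, hy, hy4⟩ | ⟨y, w, hyw, hy, hw, hy3, hw2⟩ | h3
        · exact Or.inl ⟨y, hy, hmono y 4 (by omega) hy4⟩
        · exact Or.inr (Or.inl ⟨y, w, hyw, hy, hw, hexact y 3 (by omega) hy3,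
            hmono w 2 le_rfl hw2⟩)
        · exact Or.inr (Or.inr (le_trans h3 (filter_card_mono _ heq2)))
      · intro h2; rw [hX] at h2
        rcases (hf.2 x).2.2.1 h2 with ⟨y, hy, hy3⟩ | hcnt
        · exact Or.inl ⟨y, hy, hmono y 3 (by omega) hy3⟩
        · exact Or.inr (le_trans hcnt (filter_card_mono _ heq2))
      · intro h3; rw [hX] at h3
        obtain ⟨y, hy, hy2⟩ := (hf.2 x).2.2.2 h3
        exact ⟨y, hy, hmono y 2 le_rfl hy2⟩
  · apply Finset.sum_le_sum
    intro y _
    by_cases h1 : y = v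
    · subst h1; omega
    · rw [hFx y h1]
  · intro x hx
    by_cases h1 : x = v
    · subst h1; omega
    · rw [hFx x h1] at hx; exact ⟨hx, h1⟩

/-- Main replacement: `f v = 1`, and a neighbor `u` of value 2, 3 or 4 which we bump by one
while setting `f v := 0`. -/
lemma reduce {V : Type*} [Fintype V] [DecidableEq V] (G : SimpleGraph V) [DecidableRel G.Adj]
    (f : V → ℕ) (hf : Is4RDF G f) (v u : V) (hadj : G.Adj v u) (hv : f v = 1)
    (hcase : f u = 4 ∨ (f u = 3 ∧ ∃ w, w ≠ u ∧ G.Adj v w ∧ 2 ≤ f w) ∨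
      (f u = 2 ∧ 3 ≤ ((G.neighborFinset v).filter (fun y => f y = 2)).card)) :
    ∃ f' : V → ℕ, Is4RDF G f' ∧ (∑ x, f' x ≤ ∑ x, f x) ∧
      ∀ x, f' x = 1 → f x = 1 ∧ x ≠ v := by
  classical
  have huv : u ≠ v := hadj.ne'
  have hcu : 2 ≤ f u ∧ f u ≤ 4 := by rcases hcase with h | ⟨h, _⟩ | ⟨h, _⟩ <;> omega
  set F : V → ℕ := fun x => if x = v then 0 else if x = u then f u + 1 else f x with hF
  have hFv : F v = 0 := by simp [hF]
  have hFu : F u = f u + 1 := by simp [hF, huv]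
  have hFx : ∀ x, x ≠ v → x ≠ u → F x = f x := by intro x h1 h2; simp [hF, h1, h2]
  have hmono : ∀ y k, 2 ≤ k → k ≤ f y → k ≤ F y := by
    intro y k hk hky
    by_cases h1 : y = v
    · subst h1; omega
    by_cases h2 : y = u
    · subst h2; rw [hFu]; omega
    · rw [hFx y h1 h2]; exact hky
  have F1 : ∀ y, f y = 2 → F y = 2 ∨ (y = u ∧ F y = 3 ∧ f u = 2) := by
    intro y h2
    by_cases h1 : y = v
    · subst h1; omega
    by_cases hyu : y = u
    · subst hyu; exact Or.inr ⟨rfl, by rw [hFu]; omega, h2⟩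
    · exact Or.inl (by rw [hFx y h1 hyu]; exact h2)
  have F2 : ∀ y, f y = 3 → F y = 3 ∨ (y = u ∧ F y = 4 ∧ f u = 3) := by
    intro y h3
    by_cases h1 : y = v
    · subst h1; omega
    by_cases hyu : y = u
    · subst hyu; exact Or.inr ⟨rfl, by rw [hFu]; omega, h3⟩
    · exact Or.inl (by rw [hFx y h1 hyu]; exact h3)
  have F3 : ∀ y, f y = 4 → F y = 4 ∨ (y = u ∧ F y = 5) := by
    intro y h4
    by_cases h1 : y = v
    · subst h1; omega
    by_cases hyu : y = u
    · subst hyu; exact Or.inr ⟨rfl, by rw [hFu]; omega⟩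
    · exact Or.inl (by rw [hFx y h1 hyu]; exact h4)
  have F4 : ∀ y, f y = 5 → F y = 5 := by
    intro y h5
    have h1 : y ≠ v := by intro h; subst h; omega
    have h2 : y ≠ u := by intro h; subst h; omega
    rw [hFx y h1 h2]; exact h5
  refine ⟨F, ⟨?_, fun x => ?_⟩, ?_, ?_⟩
  · intro x
    by_cases h1 : x = v
    · subst h1; omega
    by_cases h2 : x = u
    · subst h2; rw [hFu]; omega
    · rw [hFx x h1 h2]; exact hf.1 x
  · by_cases hxv : x = v
    · subst hxv
      refine ⟨fun _ => ?_, ?_, ?_, ?_⟩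
      · rcases hcase with h4 | ⟨h3, w, hwu, hwadj, hw2⟩ | ⟨h2, hcnt⟩
        · exact Or.inl ⟨u, hadj, by rw [hFu]; omega⟩
        · exact Or.inr (Or.inl ⟨u, w, Ne.symm hwu, hadj, hwadj, by rw [hFu]; omega,
            hmono w 2 le_rfl hw2⟩)
        · refine Or.inr (Or.inr (Or.inr (Or.inr ⟨?_, ?_⟩)))
          · have hdrop := filter_card_drop (G.neighborFinset x) u
              (fun y _ hy => (F1 y hy).imp id (fun h => h.1))
            omega
          · have hu3 : u ∈ (G.neighborFinset x).filter (fun y => F y = 3) :=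
              Finset.mem_filter.mpr ⟨(SimpleGraph.mem_neighborFinset _ _ _).mpr hadj,
                by rw [hFu]; omega⟩
            have := Finset.card_pos.mpr ⟨u, hu3⟩
            omega
      all_goals (intro hcontra; rw [hFv] at hcontra; omega)
    by_cases hxu : x = u
    · subst hxu
      refine ⟨?_, ?_, ?_, ?_⟩
      · intro hcontra; rw [hFu] at hcontra; omega
      · intro hcontra; rw [hFu] at hcontra; omega
      · intro hcontra; rw [hFu] at hcontra; omega
      · intro h3; rw [hFu] at h3
        have hx2 : f x = 2 := by omega
        rcases (hf.2 x).2.2.1 hx2 with ⟨y, hy, hy3⟩ | hcnt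
        · exact ⟨y, hy, hmono y 2 le_rfl (by omega)⟩
        · obtain ⟨y, hy⟩ := Finset.card_pos.mp (by omega :
            0 < ((G.neighborFinset x).filter (fun y => f y = 2)).card)
          rw [Finset.mem_filter] at hy
          exact ⟨y, (SimpleGraph.mem_neighborFinset _ _ _).mp hy.1,
            hmono y 2 le_rfl (by omega)⟩
    · have hX : F x = f x := hFx x hxv hxu
      refine ⟨?_, ?_, ?_, ?_⟩
      · intro h0; rw [hX] at h0
        rcases (hf.2 x).1 h0 with ⟨y, hy, hy5⟩ | ⟨y, w, hyw, hy, hw, hy4, hw2⟩ | h3 | h4 | ⟨h52, h53⟩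
        · exact Or.inl ⟨y, hy, F4 y hy5⟩
        · rcases F3 y hy4 with h | ⟨rfl, h5⟩
          · exact Or.inr (Or.inl ⟨y, w, hyw, hy, hw, h, hmono w 2 le_rfl hw2⟩)
          · exact Or.inl ⟨y, hy, h5⟩
        · exact Or.inr (Or.inr (Or.inl (le_trans h3
            (filter_card_mono _ (fun y _ hy => hmono y 3 (by omega) hy)))))
        · by_cases hc2 : f u = 2 ∧ u ∈ G.neighborFinset x
          · have hdrop := filter_card_drop (G.neighborFinset x) u
              (fun y _ hy => (F1 y hy).imp id (fun h => h.1))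
            have hu3 : u ∈ (G.neighborFinset x).filter (fun y => F y = 3) :=
              Finset.mem_filter.mpr ⟨hc2.2, by rw [hFu]; omega⟩
            have := Finset.card_pos.mpr ⟨u, hu3⟩
            exact Or.inr (Or.inr (Or.inr (Or.inr ⟨by omega, by omega⟩)))
          · have heq2 : ∀ y ∈ G.neighborFinset x, f y = 2 → F y = 2 := by
              intro y hyN hy2
              rcases F1 y hy2 with h | ⟨rfl, _, hfu⟩
              · exact h
              · exact absurd ⟨hfu, hyN⟩ hc2
            exact Or.inr (Or.inr (Or.inr (Or.inl (le_trans h4 (filter_card_mono _ heq2)))))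
        · obtain ⟨z, hz⟩ := Finset.card_pos.mp (by omega :
            0 < ((G.neighborFinset x).filter (fun y => f y = 3)).card)
          rw [Finset.mem_filter] at hz
          obtain ⟨hzN, hz3⟩ := hz
          rcases F2 z hz3 with hz' | ⟨rfl, hz4, hfu3⟩
          · by_cases hc2 : f u = 2 ∧ u ∈ G.neighborFinset x
            · have hne : u ≠ z := by intro h; rw [h] at hc2; omega
              have humem : u ∈ (G.neighborFinset x).filter (fun y => 3 ≤ F y) :=
                Finset.mem_filter.mpr ⟨hc2.2, by rw [hFu]; omega⟩
              have hzmem : z ∈ (G.neighborFinset x).filter (fun y => 3 ≤ F y) :=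
                Finset.mem_filter.mpr ⟨hzN, by omega⟩
              have h2c := Finset.one_lt_card.mpr ⟨u, humem, z, hzmem, hne⟩
              exact Or.inr (Or.inr (Or.inl (by omega)))
            · have heq2 : ∀ y ∈ G.neighborFinset x, f y = 2 → F y = 2 := by
                intro y hyN hy2
                rcases F1 y hy2 with h | ⟨rfl, _, hfu⟩
                · exact h
                · exact absurd ⟨hfu, hyN⟩ hc2
              have hz3' : z ∈ (G.neighborFinset x).filter (fun y => F y = 3) :=
                Finset.mem_filter.mpr ⟨hzN, hz'⟩
              have := Finset.card_pos.mpr ⟨z, hz3'⟩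
              exact Or.inr (Or.inr (Or.inr (Or.inr
                ⟨le_trans h52 (filter_card_mono _ heq2), by omega⟩)))
          · -- z = u, F u = 4, f u = 3 : twos are preserved
            have heq2 : ∀ y ∈ G.neighborFinset x, f y = 2 → F y = 2 := by
              intro y _ hy2
              rcases F1 y hy2 with h | ⟨rfl, _, hfu⟩
              · exact h
              · omega
            obtain ⟨w, hw⟩ := Finset.card_pos.mp (by omega :
              0 < ((G.neighborFinset x).filter (fun y => f y = 2)).card)
            rw [Finset.mem_filter] at hw
            have hwne : z ≠ w := by intro h; rw [h] at hfu3; omega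
            exact Or.inr (Or.inl ⟨z, w, hwne, (SimpleGraph.mem_neighborFinset _ _ _).mp hzN,
              (SimpleGraph.mem_neighborFinset _ _ _).mp hw.1, hz4,
              hmono w 2 le_rfl (by omega)⟩)
      · intro h1; rw [hX] at h1
        rcases (hf.2 x).2.1 h1 with ⟨y, hy, hy4⟩ | ⟨y, w, hyw, hy, hw, hy3, hw2⟩ | h3
        · exact Or.inl ⟨y, hy, hmono y 4 (by omega) hy4⟩
        · rcases F2 y hy3 with h | ⟨rfl, h4, _⟩
          · exact Or.inr (Or.inl ⟨y, w, hyw, hy, hw, h, hmono w 2 le_rfl hw2⟩)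
          · exact Or.inl ⟨y, hy, by omega⟩
        · by_cases hc2 : f u = 2 ∧ u ∈ G.neighborFinset x
          · have hdrop := filter_card_drop (G.neighborFinset x) u
              (fun y _ hy => (F1 y hy).imp id (fun h => h.1))
            obtain ⟨w, hw⟩ := Finset.card_pos.mp (by omega :
              0 < ((G.neighborFinset x).filter (fun y => F y = 2)).card)
            rw [Finset.mem_filter] at hw
            have hwu : u ≠ w := by intro h; rw [← h] at hw; rw [hFu] at hw; omega
            exact Or.inr (Or.inl ⟨u, w, hwu, (SimpleGraph.mem_neighborFinset _ _ _).mp hc2.2,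
              (SimpleGraph.mem_neighborFinset _ _ _).mp hw.1, by rw [hFu]; omega,
              by omega⟩)
          · have heq2 : ∀ y ∈ G.neighborFinset x, f y = 2 → F y = 2 := by
              intro y hyN hy2
              rcases F1 y hy2 with h | ⟨rfl, _, hfu⟩
              · exact h
              · exact absurd ⟨hfu, hyN⟩ hc2
            exact Or.inr (Or.inr (le_trans h3 (filter_card_mono _ heq2)))
      · intro h2; rw [hX] at h2
        rcases (hf.2 x).2.2.1 h2 with ⟨y, hy, hy3⟩ | hcnt
        · exact Or.inl ⟨y, hy, hmono y 3 (by omega) hy3⟩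
        · by_cases hc2 : f u = 2 ∧ u ∈ G.neighborFinset x
          · exact Or.inl ⟨u, (SimpleGraph.mem_neighborFinset _ _ _).mp hc2.2,
              by rw [hFu]; omega⟩
          · have heq2 : ∀ y ∈ G.neighborFinset x, f y = 2 → F y = 2 := by
              intro y hyN hy2
              rcases F1 y hy2 with h | ⟨rfl, _, hfu⟩
              · exact h
              · exact absurd ⟨hfu, hyN⟩ hc2
            exact Or.inr (le_trans hcnt (filter_card_mono _ heq2))
      · intro h3; rw [hX] at h3
        obtain ⟨y, hy, hy2⟩ := (hf.2 x).2.2.2 h3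
        exact ⟨y, hy, hmono y 2 le_rfl hy2⟩
  · -- sum
    have hu' : u ∈ Finset.univ.erase v := Finset.mem_erase.mpr ⟨huv, Finset.mem_univ u⟩
    have key : ∀ g : V → ℕ,
        ∑ x, g x = g v + (g u + ∑ x ∈ ((Finset.univ.erase v).erase u), g x) := by
      intro g
      rw [Finset.add_sum_erase _ g hu', Finset.add_sum_erase _ g (Finset.mem_univ v)]
    rw [key F, key f]
    have hrest : ∑ x ∈ ((Finset.univ.erase v).erase u), F x
        = ∑ x ∈ ((Finset.univ.erase v).erase u), f x := by
      apply Finset.sum_congr rfl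
      intro y hy
      rw [Finset.mem_erase, Finset.mem_erase] at hy
      exact hFx y hy.2.1 hy.1
    rw [hrest, hFv, hFu, hv]
    omega
  · intro x hx
    by_cases h1 : x = v
    · subst h1; omega
    by_cases h2 : x = u
    · subst h2; rw [hFu] at hx; omega
    · rw [hFx x h1 h2] at hx; exact ⟨hx, h1⟩

/-- From any 4RDF one can obtain a 4RDF of no larger weight avoiding the value 1. -/
lemma no_ones {V : Type*} [Fintype V] [DecidableEq V] (G : SimpleGraph V)
    [DecidableRel G.Adj] :
    ∀ n (f : V → ℕ), (Finset.univ.filter (fun x => f x = 1)).card ≤ n → Is4RDF G f →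
      ∃ f', Is4RDF G f' ∧ (∀ x, f' x ≠ 1) ∧ ∑ x, f' x ≤ ∑ x, f x := by
  intro n
  induction n with
  | zero =>
    intro f hcard hf
    refine ⟨f, hf, ?_, le_rfl⟩
    intro x hx
    have hmem : x ∈ Finset.univ.filter (fun x => f x = 1) :=
      Finset.mem_filter.mpr ⟨Finset.mem_univ x, hx⟩
    have := Finset.card_pos.mpr ⟨x, hmem⟩
    omega
  | succ n ih =>
    intro f hcard hf
    by_cases h1 : ∃ v, f v = 1
    · obtain ⟨v, hv⟩ := h1
      have hstep : ∃ f' : V → ℕ, Is4RDF G f' ∧ (∑ x, f' x ≤ ∑ x, f x) ∧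
          ∀ x, f' x = 1 → f x = 1 ∧ x ≠ v := by
        rcases (hf.2 v).2.1 hv with ⟨u, hadj, hu4⟩ | ⟨u, w, huw, hu, hw, hu3, hw2⟩ | hcnt
        · by_cases h5 : f u = 5
          · exact reduce5 G f hf v u hadj hv h5
          · exact reduce G f hf v u hadj hv (Or.inl (by have := hf.1 u; omega))
        · exact reduce G f hf v u hu hv (Or.inr (Or.inl ⟨hu3, w, Ne.symm huw, hw, hw2⟩))
        · obtain ⟨u, hu⟩ := Finset.card_pos.mp (by omega :
            0 < ((G.neighborFinset v).filter (fun y => f y = 2)).card)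
          rw [Finset.mem_filter] at hu
          exact reduce G f hf v u ((SimpleGraph.mem_neighborFinset _ _ _).mp hu.1) hv
            (Or.inr (Or.inr ⟨hu.2, hcnt⟩))
      obtain ⟨f', hf', hsum, hones⟩ := hstep
      have hvmem : v ∈ Finset.univ.filter (fun x => f x = 1) :=
        Finset.mem_filter.mpr ⟨Finset.mem_univ v, hv⟩
      have hsub : Finset.univ.filter (fun x => f' x = 1) ⊆
          (Finset.univ.filter (fun x => f x = 1)).erase v := by
        intro x hx
        rw [Finset.mem_filter] at hx
        obtain ⟨ha, hb⟩ := hones x hx.2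
        exact Finset.mem_erase.mpr ⟨hb, Finset.mem_filter.mpr ⟨Finset.mem_univ x, ha⟩⟩
      have hcard' : (Finset.univ.filter (fun x => f' x = 1)).card ≤ n := by
        have ha := Finset.card_le_card hsub
        have hb := Finset.card_erase_of_mem hvmem
        have hc := Finset.card_pos.mpr ⟨v, hvmem⟩
        omega
      obtain ⟨f'', h1'', h2'', h3''⟩ := ih f' hcard' hf'
      exact ⟨f'', h1'', h2'', le_trans h3'' hsum⟩
    · exact ⟨f, hf, fun x hx => h1 ⟨x, hx⟩, le_rfl⟩


/-- If `G` admits a 4RDF, then there is a 4RDF of minimum weight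
`γ_4R(G)` never taking the value `1`. -/
theorem exists_min_4RDF_avoiding_one {V : Type*} [Fintype V]
    (G : SimpleGraph V) [DecidableRel G.Adj]
    (h : ∃ g : V → ℕ, Is4RDF G g) :
    ∃ f : V → ℕ, Is4RDF G f ∧ (∀ v, f v ≠ 1) ∧ ∑ v, f v = gamma4R G := by
  classical
  obtain ⟨g, hg⟩ := h
  have hne : {n | ∃ f : V → ℕ, Is4RDF G f ∧ ∑ v, f v = n}.Nonempty :=
    ⟨∑ v, g v, g, hg, rfl⟩
  have hmem : gamma4R G ∈ {n | ∃ f : V → ℕ, Is4RDF G f ∧ ∑ v, f v = n} :=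
    Nat.sInf_mem hne
  obtain ⟨f, hf, hfsum⟩ := hmem
  obtain ⟨f', hf', hones, hle⟩ := no_ones G _ f le_rfl hf
  have hge : gamma4R G ≤ ∑ x, f' x := Nat.sInf_le ⟨f', hf', rfl⟩
  exact ⟨f', hf', hones, le_antisymm (le_trans hle (le_of_eq hfsum)) hge⟩
end

section
/- Let G = (V,E) be a finite simple graph, let f be a quadruple Roman dominating function of G, and let v be a vertex with f(v) = 1 having a neighbor u with f(u) = 4. Define g by g(v) = 0, g(u) = 5, and g(x) = f(x) for all other vertices x. Then g is a quadruple Roman dominating function of G with the same weight as f. -/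
open Finset

/-- If `f` is a 4RDF, `f v = 1`, and `v` has a neighbor `u` with
`f u = 4`, then `g` with `g v = 0`, `g u = 5`, and `g = f` elsewhere is a 4RDF of the
same weight. -/
theorem swap_one_four_to_zero_five_is_4RDF {V : Type*} [Fintype V] [DecidableEq V]
    (G : SimpleGraph V) [DecidableRel G.Adj] (f : V → ℕ) (hf : Is4RDF G f)
    (v u : V) (hvu : G.Adj v u) (hv : f v = 1) (hu : f u = 4) :
    Is4RDF G (Function.update (Function.update f v 0) u 5) ∧
      ∑ x, Function.update (Function.update f v 0) u 5 x = ∑ x, f x := by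

  obtain ⟨hf1, hf2⟩ := hf
  have hne : u ≠ v := fun h => by rw [h, hv] at hu; omega
  set g := Function.update (Function.update f v 0) u 5 with hg
  have hgdef : ∀ y, g y = if y = u then 5 else if y = v then 0 else f y := by
    intro y
    simp [hg, Function.update]
  have hgu : g u = 5 := by simp [hgdef]
  have hgv : g v = 0 := by simp [hgdef, hne.symm]
  have key : ∀ y, (2 ≤ g y ↔ 2 ≤ f y) ∧ (3 ≤ g y ↔ 3 ≤ f y) ∧ (4 ≤ g y ↔ 4 ≤ f y) ∧
      (g y = 2 ↔ f y = 2) ∧ (g y = 3 ↔ f y = 3) := by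
    intro y
    rw [hgdef]
    split_ifs with h1 h2
    · subst h1; rw [hu]; norm_num
    · subst h2; rw [hv]; norm_num
    · tauto
  have hfil : ∀ (x : V) (p q : ℕ → Prop) [DecidablePred p] [DecidablePred q],
      (∀ y, (p (g y) ↔ q (f y))) →
      ((G.neighborFinset x).filter (fun y => p (g y))).card =
        ((G.neighborFinset x).filter (fun y => q (f y))).card := by
    intro x p q _ _ hpq
    congr 1
    exact Finset.filter_congr fun y _ => by simpa using hpq y
  refine ⟨⟨?_, ?_⟩, ?_⟩
  · intro y
    rw [hgdef]
    split_ifs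
    · omega
    · omega
    · exact hf1 y
  · intro x
    refine ⟨?_, ?_, ?_, ?_⟩
    · -- g x = 0
      intro h0
      rcases eq_or_ne x v with rfl | hxv
      · left; exact ⟨u, hvu, hgu⟩
      rcases eq_or_ne x u with rfl | hxu
      · rw [hgu] at h0; omega
      have hfx : f x = 0 := by rw [hgdef, if_neg hxu, if_neg hxv] at h0; exact h0
      rcases (hf2 x).1 hfx with ⟨w, hadj, hw5⟩ | ⟨a, b, hab, ha, hb, ha4, hb2⟩ | hc | hc | hc
      · left
        refine ⟨w, hadj, ?_⟩
        rw [hgdef]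
        split_ifs with h1 h2
        · rfl
        · subst h2; omega
        · exact hw5
      · rcases eq_or_ne a u with rfl | hau
        · left; exact ⟨a, ha, hgu⟩
        · right; left
          refine ⟨a, b, hab, ha, hb, ?_, (key b).1.mpr hb2⟩
          rw [hgdef, if_neg hau, if_neg (fun h => by subst h; omega)]
          exact ha4
      · right; right; left
        rwa [hfil x (fun n => 3 ≤ n) (fun n => 3 ≤ n) (fun y => (key y).2.1)]
      · right; right; right; left
        rwa [hfil x (fun n => n = 2) (fun n => n = 2) (fun y => (key y).2.2.2.1)]
      · right; right; right; right
        rw [hfil x (fun n => n = 2) (fun n => n = 2) (fun y => (key y).2.2.2.1),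
            hfil x (fun n => n = 3) (fun n => n = 3) (fun y => (key y).2.2.2.2)]
        exact hc
    · -- g x = 1
      intro h1
      rcases eq_or_ne x v with rfl | hxv
      · rw [hgv] at h1; omega
      rcases eq_or_ne x u with rfl | hxu
      · rw [hgu] at h1; omega
      have hfx : f x = 1 := by rw [hgdef, if_neg hxu, if_neg hxv] at h1; exact h1
      rcases (hf2 x).2.1 hfx with ⟨w, hadj, hw4⟩ | ⟨a, b, hab, ha, hb, ha3, hb2⟩ | hc
      · left; exact ⟨w, hadj, (key w).2.2.1.mpr hw4⟩
      · right; left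
        exact ⟨a, b, hab, ha, hb, (key a).2.2.2.2.mpr ha3, (key b).1.mpr hb2⟩
      · right; right
        rwa [hfil x (fun n => n = 2) (fun n => n = 2) (fun y => (key y).2.2.2.1)]
    · -- g x = 2
      intro h2
      rcases eq_or_ne x v with rfl | hxv
      · rw [hgv] at h2; omega
      rcases eq_or_ne x u with rfl | hxu
      · rw [hgu] at h2; omega
      have hfx : f x = 2 := by rw [hgdef, if_neg hxu, if_neg hxv] at h2; exact h2
      rcases (hf2 x).2.2.1 hfx with ⟨w, hadj, hw3⟩ | hc
      · left; exact ⟨w, hadj, (key w).2.1.mpr hw3⟩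
      · right
        rwa [hfil x (fun n => n = 2) (fun n => n = 2) (fun y => (key y).2.2.2.1)]
    · -- g x = 3
      intro h3
      rcases eq_or_ne x v with rfl | hxv
      · rw [hgv] at h3; omega
      rcases eq_or_ne x u with rfl | hxu
      · rw [hgu] at h3; omega
      have hfx : f x = 3 := by rw [hgdef, if_neg hxu, if_neg hxv] at h3; exact h3
      obtain ⟨w, hadj, hw2⟩ := (hf2 x).2.2.2 hfx
      exact ⟨w, hadj, (key w).1.mpr hw2⟩
  · -- sums are equal
    have h1 : ∑ x, (g x + if x = v then 1 else 0) = ∑ x, (f x + if x = u then 1 else 0) := by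
      refine Finset.sum_congr rfl fun x _ => ?_
      rw [hgdef]
      rcases eq_or_ne x u with rfl | hxu
      · rcases eq_or_ne x v with rfl | hxv
        · exact (G.irrefl hvu).elim
        · simp [hxv, hu]
      · rcases eq_or_ne x v with rfl | hxv
        · simp [hxu, hne.symm, hv]
        · simp [hxu, hxv]
    rw [Finset.sum_add_distrib, Finset.sum_add_distrib] at h1
    simp only [Finset.sum_ite_eq', Finset.mem_univ, if_true] at h1
    omega
end

section
/- Let G = (V,E) be a finite simple graph, let f be a quadruple Roman dominating function of G, and let v be a vertex with f(v) = 1 having distinct neighbors u and w with f(u) = 3 and f(w) = 2. Define g by g(v) = 0, g(w) = 3, and g(x) = f(x) for all other vertices x (so g(u) = 3). Then g is a quadruple Roman dominating function of G with the same weight as f. -/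
open Finset

/-- If `f` is a 4RDF, `f v = 1`, and `v` has distinct neighbors `u, w`
with `f u = 3` and `f w = 2`, then `g` with `g v = 0`, `g w = 3`, and `g = f`
elsewhere (so `g u = 3`) is a 4RDF of the same weight. -/
theorem swap_one_three_two_to_zero_three_three_is_4RDF {V : Type*} [Fintype V]
    [DecidableEq V] (G : SimpleGraph V) [DecidableRel G.Adj] (f : V → ℕ)
    (hf : Is4RDF G f) (v u w : V) (huw : u ≠ w) (hvu : G.Adj v u) (hvw : G.Adj v w)
    (hv : f v = 1) (hu : f u = 3) (hw : f w = 2) :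
    Is4RDF G (Function.update (Function.update f v 0) w 3) ∧
      ∑ x, Function.update (Function.update f v 0) w 3 x = ∑ x, f x := by

  have hvw' : v ≠ w := G.ne_of_adj hvw
  have hvu' : v ≠ u := G.ne_of_adj hvu
  set g := Function.update (Function.update f v 0) w 3 with hg
  have gw : g w = 3 := by simp [hg]
  have gv : g v = 0 := by
    simp only [hg, Function.update_of_ne hvw', Function.update_self]
  have gx : ∀ x, x ≠ v → x ≠ w → g x = f x := by
    intro x hxv hxw
    simp [hg, Function.update_of_ne hxw, Function.update_of_ne hxv]
  have gu : g u = 3 := by rw [gx u hvu'.symm huw]; exact hu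
  have gmono : ∀ y, y ≠ v → f y ≤ g y := by
    intro y hy
    by_cases h : y = w
    · subst h; rw [gw, hw]; omega
    · rw [gx y hy h]
  have gle : ∀ y, g y ≤ 5 := by
    intro y
    by_cases h1 : y = v
    · subst h1; rw [gv]; omega
    by_cases h2 : y = w
    · subst h2; rw [gw]; omega
    · rw [gx y h1 h2]; exact hf.1 y
  constructor
  · refine ⟨gle, fun x => ?_⟩
    by_cases hxv : x = v
    · subst hxv
      refine ⟨fun _ => ?_, fun h => ?_, fun h => ?_, fun h => ?_⟩
      · right; right; left
        have hsub : ({u, w} : Finset V) ⊆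
            (G.neighborFinset x).filter (fun y => 3 ≤ g y) := by
          intro y hy
          simp only [Finset.mem_insert, Finset.mem_singleton] at hy
          rcases hy with rfl | rfl <;>
            simp [Finset.mem_filter, SimpleGraph.mem_neighborFinset, hvu, hvw, gu, gw]
        calc 2 = ({u, w} : Finset V).card := by
                rw [Finset.card_insert_of_notMem (by simpa using huw),
                  Finset.card_singleton]
          _ ≤ _ := Finset.card_le_card hsub
      · rw [gv] at h; omega
      · rw [gv] at h; omega
      · rw [gv] at h; omega
    by_cases hxw : x = w
    · subst hxw
      refine ⟨fun h => ?_, fun h => ?_, fun h => ?_, fun _ => ?_⟩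
      · rw [gw] at h; omega
      · rw [gw] at h; omega
      · rw [gw] at h; omega
      · rcases (hf.2 x).2.2.1 hw with ⟨y, hy, h3⟩ | hcard
        · have hyv : y ≠ v := by intro hh; rw [hh, hv] at h3; omega
          exact ⟨y, hy, le_trans (by omega) (gmono y hyv)⟩
        · have hne : ((G.neighborFinset x).filter (fun y => f y = 2)).Nonempty :=
            Finset.card_pos.mp (by omega)
          obtain ⟨y, hy⟩ := hne
          simp only [Finset.mem_filter, SimpleGraph.mem_neighborFinset] at hy
          have hyv : y ≠ v := by intro hh; rw [hh, hv] at hy; omega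
          exact ⟨y, hy.1, le_trans (by omega) (gmono y hyv)⟩
    -- generic vertex
    have hgx : g x = f x := gx x hxv hxw
    obtain ⟨hc0, hc1, hc2, hc3⟩ := hf.2 x
    refine ⟨fun h => ?_, fun h => ?_, fun h => ?_, fun h => ?_⟩
    · rcases hc0 (hgx.symm.trans h) with ⟨y, hy, h5⟩ | ⟨a, b, hab, ha, hb, ha4, hb2⟩ |
        hcard3 | hcard4 | ⟨hcard2, hcard3'⟩
      · have hyv : y ≠ v := by intro hh; rw [hh, hv] at h5; omega
        have hyw : y ≠ w := by intro hh; rw [hh, hw] at h5; omega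
        exact Or.inl ⟨y, hy, by rw [gx y hyv hyw]; exact h5⟩
      · have hav : a ≠ v := by intro hh; rw [hh, hv] at ha4; omega
        have haw : a ≠ w := by intro hh; rw [hh, hw] at ha4; omega
        have hbv : b ≠ v := by intro hh; rw [hh, hv] at hb2; omega
        exact Or.inr (Or.inl ⟨a, b, hab, ha, hb, by rw [gx a hav haw]; exact ha4,
          le_trans hb2 (gmono b hbv)⟩)
      · refine Or.inr (Or.inr (Or.inl (le_trans hcard3 (Finset.card_le_card ?_))))
        intro y hy
        simp only [Finset.mem_filter] at hy ⊢
        have hyv : y ≠ v := by intro hh; rw [hh, hv] at hy; omega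
        exact ⟨hy.1, le_trans hy.2 (gmono y hyv)⟩
      · by_cases hadj : G.Adj x w
        · refine Or.inr (Or.inr (Or.inr (Or.inr ⟨?_, ?_⟩)))
          · have hsub : ((G.neighborFinset x).filter (fun y => f y = 2)).erase w ⊆
                (G.neighborFinset x).filter (fun y => g y = 2) := by
              intro y hy
              rw [Finset.mem_erase] at hy
              simp only [Finset.mem_filter] at hy ⊢
              have hyv : y ≠ v := by intro hh; rw [hh] at hy; rw [hv] at hy; omega
              exact ⟨hy.2.1, by rw [gx y hyv hy.1]; exact hy.2.2⟩
            have := Finset.card_le_card hsub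
            have hwm : w ∈ (G.neighborFinset x).filter (fun y => f y = 2) := by
              simp [Finset.mem_filter, SimpleGraph.mem_neighborFinset, hadj, hw]
            rw [Finset.card_erase_of_mem hwm] at this
            omega
          · have hsub : ({w} : Finset V) ⊆
                (G.neighborFinset x).filter (fun y => g y = 3) := by
              intro y hy
              rw [Finset.mem_singleton] at hy; subst hy
              simp [Finset.mem_filter, SimpleGraph.mem_neighborFinset, hadj, gw]
            simpa using Finset.card_le_card hsub
        · refine Or.inr (Or.inr (Or.inr (Or.inl (le_trans hcard4
            (Finset.card_le_card ?_)))))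
          intro y hy
          simp only [Finset.mem_filter, SimpleGraph.mem_neighborFinset] at hy ⊢
          have hyv : y ≠ v := by intro hh; rw [hh, hv] at hy; omega
          have hyw : y ≠ w := by intro hh; rw [hh] at hy; exact hadj hy.1
          exact ⟨hy.1, by rw [gx y hyv hyw]; exact hy.2⟩
      · have hne : ((G.neighborFinset x).filter (fun y => f y = 3)).Nonempty :=
          Finset.card_pos.mp (by omega)
        obtain ⟨z, hz⟩ := hne
        simp only [Finset.mem_filter, SimpleGraph.mem_neighborFinset] at hz
        have hzv : z ≠ v := by intro hh; rw [hh, hv] at hz; omega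
        have hzw : z ≠ w := by intro hh; rw [hh, hw] at hz; omega
        by_cases hadj : G.Adj x w
        · refine Or.inr (Or.inr (Or.inl ?_))
          have hsub : ({z, w} : Finset V) ⊆
              (G.neighborFinset x).filter (fun y => 3 ≤ g y) := by
            intro y hy
            simp only [Finset.mem_insert, Finset.mem_singleton] at hy
            rcases hy with rfl | rfl
            · simp only [Finset.mem_filter, SimpleGraph.mem_neighborFinset]
              exact ⟨hz.1, by rw [gx y hzv hzw, hz.2]⟩
            · simp [Finset.mem_filter, SimpleGraph.mem_neighborFinset, hadj, gw]
          calc 2 = ({z, w} : Finset V).card := by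
                  rw [Finset.card_insert_of_notMem (by simpa using hzw),
                    Finset.card_singleton]
            _ ≤ _ := Finset.card_le_card hsub
        · refine Or.inr (Or.inr (Or.inr (Or.inr ⟨le_trans hcard2
            (Finset.card_le_card ?_), le_trans hcard3' (Finset.card_le_card ?_)⟩)))
          · intro y hy
            simp only [Finset.mem_filter, SimpleGraph.mem_neighborFinset] at hy ⊢
            have hyv : y ≠ v := by intro hh; rw [hh, hv] at hy; omega
            have hyw : y ≠ w := by intro hh; rw [hh] at hy; exact hadj hy.1
            exact ⟨hy.1, by rw [gx y hyv hyw]; exact hy.2⟩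
          · intro y hy
            simp only [Finset.mem_filter, SimpleGraph.mem_neighborFinset] at hy ⊢
            have hyv : y ≠ v := by intro hh; rw [hh, hv] at hy; omega
            have hyw : y ≠ w := by intro hh; rw [hh, hw] at hy; omega
            exact ⟨hy.1, by rw [gx y hyv hyw]; exact hy.2⟩
    · rcases hc1 (hgx.symm.trans h) with ⟨y, hy, h4⟩ | ⟨a, b, hab, ha, hb, ha3, hb2⟩ |
        hcard
      · have hyv : y ≠ v := by intro hh; rw [hh, hv] at h4; omega
        exact Or.inl ⟨y, hy, le_trans h4 (gmono y hyv)⟩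
      · have hav : a ≠ v := by intro hh; rw [hh, hv] at ha3; omega
        have haw : a ≠ w := by intro hh; rw [hh, hw] at ha3; omega
        have hbv : b ≠ v := by intro hh; rw [hh, hv] at hb2; omega
        exact Or.inr (Or.inl ⟨a, b, hab, ha, hb, by rw [gx a hav haw]; exact ha3,
          le_trans hb2 (gmono b hbv)⟩)
      · by_cases hadj : G.Adj x w
        · have hne : (((G.neighborFinset x).filter (fun y => f y = 2)).erase
              w).Nonempty := by
            apply Finset.card_pos.mp
            have hwm : w ∈ (G.neighborFinset x).filter (fun y => f y = 2) := by
              simp [Finset.mem_filter, SimpleGraph.mem_neighborFinset, hadj, hw]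
            rw [Finset.card_erase_of_mem hwm]
            omega
          obtain ⟨y, hy⟩ := hne
          rw [Finset.mem_erase] at hy
          simp only [Finset.mem_filter, SimpleGraph.mem_neighborFinset] at hy
          have hyv : y ≠ v := by intro hh; rw [hh] at hy; rw [hv] at hy; omega
          refine Or.inr (Or.inl ⟨w, y, fun hh => hy.1 hh.symm, hadj, hy.2.1,
            gw, ?_⟩)
          rw [gx y hyv hy.1, hy.2.2]
        · refine Or.inr (Or.inr (le_trans hcard (Finset.card_le_card ?_)))
          intro y hy
          simp only [Finset.mem_filter, SimpleGraph.mem_neighborFinset] at hy ⊢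
          have hyv : y ≠ v := by intro hh; rw [hh, hv] at hy; omega
          have hyw : y ≠ w := by intro hh; rw [hh] at hy; exact hadj hy.1
          exact ⟨hy.1, by rw [gx y hyv hyw]; exact hy.2⟩
    · rcases hc2 (hgx.symm.trans h) with ⟨y, hy, h3⟩ | hcard
      · have hyv : y ≠ v := by intro hh; rw [hh, hv] at h3; omega
        exact Or.inl ⟨y, hy, le_trans h3 (gmono y hyv)⟩
      · by_cases hadj : G.Adj x w
        · exact Or.inl ⟨w, hadj, by rw [gw]⟩
        · refine Or.inr (le_trans hcard (Finset.card_le_card ?_))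
          intro y hy
          simp only [Finset.mem_filter, SimpleGraph.mem_neighborFinset] at hy ⊢
          have hyv : y ≠ v := by intro hh; rw [hh, hv] at hy; omega
          have hyw : y ≠ w := by intro hh; rw [hh] at hy; exact hadj hy.1
          exact ⟨hy.1, by rw [gx y hyv hyw]; exact hy.2⟩
    · obtain ⟨y, hy, h2⟩ := hc3 (hgx.symm.trans h)
      have hyv : y ≠ v := by intro hh; rw [hh, hv] at h2; omega
      exact ⟨y, hy, le_trans h2 (gmono y hyv)⟩
  · have key : ∀ x, g x + (if x = v then 1 else 0) = f x + (if x = w then 1 else 0) := by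
      intro x
      by_cases h1 : x = v
      · subst h1; rw [gv, hv, if_pos rfl, if_neg hvw']
      by_cases h2 : x = w
      · subst h2; rw [gw, hw, if_neg h1, if_pos rfl]
      · rw [gx x h1 h2, if_neg h1, if_neg h2]
    have hsum := Finset.sum_congr rfl (fun x (_ : x ∈ Finset.univ) => key x)
    rw [Finset.sum_add_distrib, Finset.sum_add_distrib,
      Finset.sum_ite_eq' Finset.univ v (fun _ => 1),
      Finset.sum_ite_eq' Finset.univ w (fun _ => 1)] at hsum
    simp only [Finset.mem_univ, if_true] at hsum
    omega
end

section
/- Let G = (V,E) be a finite simple graph, let f be a quadruple Roman dominating function of G, and let v be a vertex with f(v) = 1 having three distinct neighbors u, w, y with f(u) = f(w) = f(y) = 2. Define g by g(v) = 0, g(y) = 3, and g(x) = f(x) for all other vertices x (so g(u) = g(w) = 2). Then g is a quadruple Roman dominating function of G with the same weight as f. -/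
open Finset

/-- If `f` is a 4RDF, `f v = 1`, and `v` has three distinct neighbors
`u, w, y` with `f u = f w = f y = 2`, then `g` with `g v = 0`, `g y = 3`, and `g = f`
elsewhere (so `g u = g w = 2`) is a 4RDF of the same weight. -/
theorem swap_one_three_twos_is_4RDF {V : Type*} [Fintype V] [DecidableEq V]
    (G : SimpleGraph V) [DecidableRel G.Adj] (f : V → ℕ) (hf : Is4RDF G f)
    (v u w y : V) (huw : u ≠ w) (huy : u ≠ y) (hwy : w ≠ y)
    (hvu : G.Adj v u) (hvw : G.Adj v w) (hvy : G.Adj v y)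
    (hv : f v = 1) (hu : f u = 2) (hw : f w = 2) (hy : f y = 2) :
    Is4RDF G (Function.update (Function.update f v 0) y 3) ∧
      ∑ x, Function.update (Function.update f v 0) y 3 x = ∑ x, f x := by
  classical
  obtain ⟨hf5, hfc⟩ := hf
  set g : V → ℕ := Function.update (Function.update f v 0) y 3 with hgdef
  have hvy' : v ≠ y := hvy.ne
  have hgy : g y = 3 := by simp [hgdef]
  have hgv : g v = 0 := by
    simp [hgdef, Function.update_of_ne hvy']
  have hgo : ∀ x, x ≠ v → x ≠ y → g x = f x := by
    intro x h1 h2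
    simp [hgdef, Function.update_of_ne h2, Function.update_of_ne h1]
  have hnev : ∀ t, 2 ≤ f t → t ≠ v := by intro t ht h; subst h; omega
  have hney3 : ∀ t, 3 ≤ f t → t ≠ y := by intro t ht h; subst h; omega
  have hge2 : ∀ t, 2 ≤ f t → 2 ≤ g t := by
    intro t ht
    by_cases hty : t = y
    · subst hty; rw [hgy]; omega
    · rw [hgo t (hnev t ht) hty]; exact ht
  have hge3 : ∀ t, 3 ≤ f t → g t = f t := fun t ht =>
    hgo t (hnev t (by omega)) (hney3 t ht)
  have hgu : g u = 2 := by rw [hgo u (hnev u (by omega)) huy]; exact hu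
  have hgw : g w = 2 := by rw [hgo w (hnev w (by omega)) hwy]; exact hw
  refine ⟨⟨?_, ?_⟩, ?_⟩
  · -- bound
    intro x
    by_cases h1 : x = y
    · subst h1; rw [hgy]; omega
    · by_cases h2 : x = v
      · subst h2; rw [hgv]; omega
      · rw [hgo x h2 h1]; exact hf5 x
  · intro z
    obtain ⟨h0, h1, h2, h3⟩ := hfc z
    by_cases hzv : z = v
    · subst hzv
      refine ⟨fun _ => ?_, fun h => ?_, fun h => ?_, fun h => ?_⟩
      · right; right; right; right
        constructor
        · have hsub : ({u, w} : Finset V) ⊆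
              (G.neighborFinset z).filter (fun t => g t = 2) := by
            intro x hx
            rcases Finset.mem_insert.mp hx with rfl | hx
            · exact Finset.mem_filter.mpr ⟨(G.mem_neighborFinset z x).mpr hvu, hgu⟩
            · rw [Finset.mem_singleton] at hx; subst hx
              exact Finset.mem_filter.mpr ⟨(G.mem_neighborFinset z x).mpr hvw, hgw⟩
          have := Finset.card_le_card hsub
          rw [Finset.card_insert_of_notMem (by simp [huw]), Finset.card_singleton] at this
          omega
        · have hysub : y ∈ (G.neighborFinset z).filter (fun t => g t = 3) :=
            Finset.mem_filter.mpr ⟨(G.mem_neighborFinset z y).mpr hvy, hgy⟩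
          exact Finset.card_pos.mpr ⟨y, hysub⟩
      · rw [hgv] at h; omega
      · rw [hgv] at h; omega
      · rw [hgv] at h; omega
    · by_cases hzy : z = y
      · subst hzy
        refine ⟨fun h => ?_, fun h => ?_, fun h => ?_, fun _ => ?_⟩
        · rw [hgy] at h; omega
        · rw [hgy] at h; omega
        · rw [hgy] at h; omega
        · rcases h2 hy with ⟨t, hadj, ht⟩ | hcard
          · exact ⟨t, hadj, hge2 t (by omega)⟩
          · obtain ⟨t, ht⟩ := Finset.card_pos.mp (by omega :
              0 < ((G.neighborFinset z).filter (fun t => f t = 2)).card)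
            rw [Finset.mem_filter, SimpleGraph.mem_neighborFinset] at ht
            exact ⟨t, ht.1, hge2 t (by omega)⟩
      · -- general vertex
        have hgz : g z = f z := hgo z hzv hzy
        have hsub3 : (G.neighborFinset z).filter (fun t => 3 ≤ f t) ⊆
            (G.neighborFinset z).filter (fun t => 3 ≤ g t) := by
          intro t ht
          rw [Finset.mem_filter] at ht ⊢
          obtain ⟨ht1, ht2⟩ := ht
          exact ⟨ht1, by rw [hge3 t ht2]; exact ht2⟩
        have hsub3' : (G.neighborFinset z).filter (fun t => f t = 3) ⊆
            (G.neighborFinset z).filter (fun t => g t = 3) := by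
          intro t ht
          rw [Finset.mem_filter] at ht ⊢
          obtain ⟨ht1, ht2⟩ := ht
          exact ⟨ht1, by rw [hge3 t ht2.ge]; exact ht2⟩
        have hsub2 : ((G.neighborFinset z).filter (fun t => f t = 2)).erase y ⊆
            (G.neighborFinset z).filter (fun t => g t = 2) := by
          intro t ht
          obtain ⟨hty, ht⟩ := Finset.mem_erase.mp ht
          rw [Finset.mem_filter] at ht ⊢
          obtain ⟨ht1, ht2⟩ := ht
          exact ⟨ht1, by rw [hgo t (hnev t ht2.ge) hty]; exact ht2⟩
        refine ⟨fun h => ?_, fun h => ?_, fun h => ?_, fun h => ?_⟩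
        · rw [hgz] at h
          rcases h0 h with ⟨t, hadj, ht⟩ | ⟨a, b, hab, ha, hb, ha4, hb2⟩ | hc3 | hc4 |
            ⟨hc2, hc3'⟩
          · left
            exact ⟨t, hadj, by rw [hge3 t (by omega)]; exact ht⟩
          · right; left
            exact ⟨a, b, hab, ha, hb, by rw [hge3 a (by omega)]; exact ha4, hge2 b hb2⟩
          · right; right; left
            exact le_trans hc3 (Finset.card_le_card hsub3)
          · by_cases hy2 : y ∈ (G.neighborFinset z).filter (fun t => f t = 2)
            · right; right; right; right
              refine ⟨?_, ?_⟩
              · have := Finset.card_le_card hsub2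
                rw [Finset.card_erase_of_mem hy2] at this
                omega
              · have hym : y ∈ (G.neighborFinset z).filter (fun t => g t = 3) := by
                  rw [Finset.mem_filter] at hy2 ⊢
                  exact ⟨hy2.1, hgy⟩
                exact Finset.card_pos.mpr ⟨y, hym⟩
            · right; right; right; left
              have := Finset.card_le_card hsub2
              rw [Finset.erase_eq_of_notMem hy2] at this
              omega
          · by_cases hy2 : y ∈ (G.neighborFinset z).filter (fun t => f t = 2)
            · right; right; left
              obtain ⟨t, ht⟩ := Finset.card_pos.mp (by omega :
                0 < ((G.neighborFinset z).filter (fun t => f t = 3)).card)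
              rw [Finset.mem_filter] at ht
              have hty : t ≠ y := by
                intro h'; rw [h', hy] at ht; omega
              have ht' : t ∈ (G.neighborFinset z).filter (fun t => 3 ≤ g t) := by
                rw [Finset.mem_filter]
                exact ⟨ht.1, by rw [hge3 t ht.2.ge]; exact ht.2.ge⟩
              have hy' : y ∈ (G.neighborFinset z).filter (fun t => 3 ≤ g t) := by
                rw [Finset.mem_filter] at hy2 ⊢
                exact ⟨hy2.1, by rw [hgy]⟩
              have := Finset.one_lt_card.mpr ⟨t, ht', y, hy', hty⟩
              omega
            · right; right; right; right
              refine ⟨?_, ?_⟩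
              · have := Finset.card_le_card hsub2
                rw [Finset.erase_eq_of_notMem hy2] at this
                omega
              · exact le_trans hc3' (Finset.card_le_card hsub3')
        · rw [hgz] at h
          rcases h1 h with ⟨t, hadj, ht⟩ | ⟨a, b, hab, ha, hb, ha3, hb2⟩ | hc2
          · left
            exact ⟨t, hadj, by rw [hge3 t (by omega)]; exact ht⟩
          · right; left
            exact ⟨a, b, hab, ha, hb, by rw [hge3 a ha3.ge]; exact ha3, hge2 b hb2⟩
          · by_cases hy2 : y ∈ (G.neighborFinset z).filter (fun t => f t = 2)
            · right; left
              have hcard : 0 < (((G.neighborFinset z).filter (fun t => f t = 2)).erase y).card := by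
                rw [Finset.card_erase_of_mem hy2]; omega
              obtain ⟨b, hb⟩ := Finset.card_pos.mp hcard
              obtain ⟨hby, hb⟩ := Finset.mem_erase.mp hb
              rw [Finset.mem_filter, SimpleGraph.mem_neighborFinset] at hb
              have hy2' := Finset.mem_filter.mp hy2
              refine ⟨y, b, Ne.symm hby, (G.mem_neighborFinset z y).mp hy2'.1, hb.1,
                hgy, ?_⟩
              rw [hgo b (hnev b hb.2.ge) hby]; omega
            · right; right
              have := Finset.card_le_card hsub2
              rw [Finset.erase_eq_of_notMem hy2] at this
              omega
        · rw [hgz] at h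
          rcases h2 h with ⟨t, hadj, ht⟩ | hc2
          · left
            exact ⟨t, hadj, by rw [hge3 t ht]; exact ht⟩
          · by_cases hy2 : y ∈ (G.neighborFinset z).filter (fun t => f t = 2)
            · left
              have hy2' := Finset.mem_filter.mp hy2
              exact ⟨y, (G.mem_neighborFinset z y).mp hy2'.1, by rw [hgy]⟩
            · right
              have := Finset.card_le_card hsub2
              rw [Finset.erase_eq_of_notMem hy2] at this
              omega
        · rw [hgz] at h
          obtain ⟨t, hadj, ht⟩ := h3 h
          exact ⟨t, hadj, hge2 t ht⟩
  · -- sum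
    have key : ∀ x, g x + (if x = v then 1 else 0) = f x + (if x = y then 1 else 0) := by
      intro x
      by_cases hxv : x = v
      · subst hxv
        simp [hgv, hv, hvy']
      · by_cases hxy : x = y
        · subst hxy
          simp [hgy, hy, hxv]
        · simp [hgo x hxv hxy, hxv, hxy]
    have hsum := Finset.sum_congr rfl (fun x (_ : x ∈ (univ : Finset V)) => key x)
    rw [Finset.sum_add_distrib, Finset.sum_add_distrib,
      Finset.sum_ite_eq' univ v (fun _ => 1), Finset.sum_ite_eq' univ y (fun _ => 1)] at hsum
    simp only [Finset.mem_univ, if_true] at hsum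
    omega
end
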